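/- arXiv:0712.0981 — 3 statements merged into one kernel-verified Lean document; each statement's English description precedes it below -/
import Mathlib

section
/- Let X ∈ Ω_λ be generic, and for a = 0,…,N−1 let t^{(a)}_1,…,t^{(a)}_{l_a} be the (simple) roots of y_a, the root coordinates of X. Then these numbers satisfy the Bethe ansatz equations: for every a = 1,…,N−1 and every j = 1,…,l_a, Σ_{j'=1}^{l_{a−1}} 1/(t^{(a)}_j − t^{(a−1)}_{j'}) − Σ_{1≤j'≤l_a, j'≠j} 2/(t^{(a)}_j − t^{(a)}_{j'}) + Σ_{j'=1}^{l_{a+1}} 1/(t^{(a)}_j − t^{(a+1)}_{j'}) = 0, where l_N = 0 so the last sum is empty for a = N−1. -/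
open Polynomial

noncomputable section

/-- `d i = λ i + N - i` (0-based indexing: `d i = lam i + (N - 1 - i)`). -/
def degSeq (N : ℕ) (lam : Fin N → ℕ) (i : Fin N) : ℕ :=
  lam i + (N - 1 - (i : ℕ))

/-- The Schubert cell `Ω_λ`. -/
def Omega (N : ℕ) (lam : Fin N → ℕ) : Set (Submodule ℂ (Polynomial ℂ)) :=
  {X | Module.finrank ℂ X = N ∧
    ∀ i : Fin N, ∃ p ∈ X, p.degree = (degSeq N lam i : ℕ)}

/-- `l a = λ_{a+1} + … + λ_N` (0-based: sum of `lam b` over `b ≥ a`); note `l N = 0`. -/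
def lseq (N : ℕ) (lam : Fin N → ℕ) (a : ℕ) : ℕ :=
  ∑ b ∈ Finset.univ.filter (fun b : Fin N => a ≤ (b : ℕ)), lam b

/-- The Wronskian `Wr(g_1, …, g_r)`. -/
noncomputable def wronskian {r : ℕ} (g : Fin r → Polynomial ℂ) : Polynomial ℂ :=
  (Matrix.of fun i j : Fin r =>
    (⇑Polynomial.derivative : Polynomial ℂ → Polynomial ℂ)^[(j : ℕ)] (g i)).det

/-- The Wronskian `Wr(f_{a+1}, …, f_N)` of the tail of a tuple (0-based: tail from index `a`). -/
noncomputable def wrTail {N : ℕ} (f : Fin N → Polynomial ℂ) (a : ℕ) : Polynomial ℂ :=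
  wronskian (fun s : Fin (N - a) => f ⟨a + (s : ℕ), by have := s.isLt; omega⟩)

/-- `f` is a flag basis of `X ∈ Ω_λ`. -/
def IsFlagBasis (N : ℕ) (lam : Fin N → ℕ) (X : Submodule ℂ (Polynomial ℂ))
    (f : Fin N → Polynomial ℂ) : Prop :=
  LinearIndependent ℂ f ∧ Submodule.span ℂ (Set.range f) = X ∧
    ∀ i : Fin N, (f i).Monic ∧ (f i).natDegree = degSeq N lam i ∧
      ∀ j : Fin N, j ≠ i → (f i).coeff (degSeq N lam j) = 0

/-- The Bethe ansatz equations for the tuple `t = (t^{(a)}_j)`, `0 ≤ a ≤ N−1`,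
`1 ≤ j ≤ l a` (with `l N = 0`, so the last sum is empty for `a = N−1`). -/
def BAE (N : ℕ) (lam : Fin N → ℕ) (t : (a : ℕ) → Fin (lseq N lam a) → ℂ) : Prop :=
  ∀ a : ℕ, 1 ≤ a → a < N → ∀ j : Fin (lseq N lam a),
    (∑ j' : Fin (lseq N lam (a - 1)), 1 / (t a j - t (a - 1) j')) -
    (∑ j' ∈ Finset.univ.filter (fun j' : Fin (lseq N lam a) => j' ≠ j), 2 / (t a j - t a j')) +
    (∑ j' : Fin (lseq N lam (a + 1)), 1 / (t a j - t (a + 1) j')) = 0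


section BAEHelpers

variable {R : Type*} [CommRing R]

lemma succAbove_val {n : ℕ} (p : Fin (n+1)) (i : Fin n) :
    ((p.succAbove i : Fin (n+1)) : ℕ) = if (i : ℕ) < (p : ℕ) then (i : ℕ) else (i : ℕ) + 1 := by
  rw [Fin.succAbove]
  split_ifs with h1 h2 h2
  · rfl
  · exact absurd (by simpa [Fin.lt_def] using h1) h2
  · exact absurd (by simpa [Fin.lt_def] using h2) h1
  · rfl

lemma det_eq_of_column_single {n : ℕ} (A : Matrix (Fin (n+1)) (Fin (n+1)) R) (i0 j : Fin (n+1))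
    (h : ∀ i, A i j = if i = i0 then 1 else 0) :
    A.det = (-1)^((i0:ℕ)+(j:ℕ)) * (A.submatrix i0.succAbove j.succAbove).det := by
  rw [Matrix.det_succ_column A j, Finset.sum_eq_single i0]
  · rw [h i0, if_pos rfl, mul_one]
  · intro i _ hi; rw [h i, if_neg hi, mul_zero, zero_mul]
  · intro h'; exact absurd (Finset.mem_univ i0) h'

lemma det_eq_of_row_single {n : ℕ} (A : Matrix (Fin (n+1)) (Fin (n+1)) R) (i j0 : Fin (n+1))
    (h : ∀ j, A i j = if j = j0 then 1 else 0) :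
    A.det = (-1)^((i:ℕ)+(j0:ℕ)) * (A.submatrix i.succAbove j0.succAbove).det := by
  rw [Matrix.det_succ_row A i, Finset.sum_eq_single j0]
  · rw [h j0, if_pos rfl, mul_one]
  · intro j _ hj; rw [h j, if_neg hj, mul_zero, zero_mul]
  · intro h'; exact absurd (Finset.mem_univ j0) h'

lemma det_one_update_two : ∀ (n : ℕ) (v w : Fin (n+2) → R),
    ((((1 : Matrix (Fin (n+2)) (Fin (n+2)) R).updateCol 0 v).updateCol 1 w)).det
      = v 0 * w 1 - v 1 * w 0 := by
  intro n
  induction n with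
  | zero =>
    intro v w
    rw [Matrix.det_fin_two]
    simp [Matrix.updateCol_apply]
    ring
  | succ n ih =>
    intro v w
    have hcol : ∀ i, ((((1 : Matrix (Fin (n+3)) (Fin (n+3)) R).updateCol 0 v).updateCol 1 w)) i (Fin.last (n+2))
        = if i = Fin.last (n+2) then 1 else 0 := by
      intro i
      simp only [Matrix.updateCol_apply, Matrix.one_apply]
      split_ifs <;> simp_all [Fin.ext_iff] <;> omega
    rw [det_eq_of_column_single _ (Fin.last (n+2)) (Fin.last (n+2)) hcol]
    have hsub : ((((1 : Matrix (Fin (n+3)) (Fin (n+3)) R).updateCol 0 v).updateCol 1 w)).submatrix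
          (Fin.last (n+2)).succAbove (Fin.last (n+2)).succAbove
        = (((1 : Matrix (Fin (n+2)) (Fin (n+2)) R).updateCol 0 (fun i => v i.castSucc)).updateCol 1
            (fun i => w i.castSucc)) := by
      ext i j
      simp only [Matrix.submatrix_apply, Fin.succAbove_last, Matrix.updateCol_apply,
        Matrix.one_apply]
      split_ifs <;> (simp only [Fin.ext_iff, Fin.coe_castSucc, Fin.val_zero, Fin.val_one] at *) <;> first | rfl | omega
    rw [hsub, ih]
    have hpow : ((-1 : R))^((Fin.last (n+2) : ℕ) + (Fin.last (n+2) : ℕ)) = 1 := by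
      rw [← two_mul, pow_mul]; norm_num
    rw [hpow, one_mul]
    simp

lemma derivative_finset_prod {ι : Type*} [DecidableEq ι] (s : Finset ι) (f : ι → ℂ[X]) :
    derivative (∏ i ∈ s, f i) = ∑ i ∈ s, (∏ j ∈ s.erase i, f j) * derivative (f i) := by
  induction s using Finset.induction_on with
  | empty => simp
  | @insert a s ha ih =>
    rw [Finset.prod_insert ha, derivative_mul, ih, Finset.sum_insert ha, Finset.erase_insert ha,
      Finset.mul_sum]
    rw [mul_comm (derivative (f a)) (∏ i ∈ s, f i)]
    congr 1
    refine Finset.sum_congr rfl fun i hi => ?_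
    rw [Finset.erase_insert_of_ne (by rintro rfl; exact ha hi),
      Finset.prod_insert (fun h => ha (Finset.mem_of_mem_erase h))]
    ring

lemma derivative_det {n : ℕ} (M : Matrix (Fin n) (Fin n) ℂ[X]) :
    derivative M.det = ∑ j, (M.updateCol j (fun i => derivative (M i j))).det := by
  classical
  rw [Matrix.det_apply', derivative_sum]
  have step : ∀ σ : Equiv.Perm (Fin n),
      derivative (((Equiv.Perm.sign σ : ℤ) : ℂ[X]) * ∏ i, M (σ i) i)
        = ∑ j, ((Equiv.Perm.sign σ : ℤ) : ℂ[X]) *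
            ((∏ i ∈ Finset.univ.erase j, M (σ i) i) * derivative (M (σ j) j)) := by
    intro σ
    rw [derivative_mul, Polynomial.derivative_intCast, zero_mul, zero_add,
      derivative_finset_prod, Finset.mul_sum]
  rw [Finset.sum_congr rfl fun σ _ => step σ, Finset.sum_comm]
  refine Finset.sum_congr rfl fun j _ => ?_
  rw [Matrix.det_apply']
  refine Finset.sum_congr rfl fun σ _ => ?_
  congr 1
  rw [← Finset.mul_prod_erase Finset.univ _ (Finset.mem_univ j)]
  rw [Matrix.updateCol_self, mul_comm]
  congr 1
  refine Finset.prod_congr rfl fun i hi => ?_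
  rw [Matrix.updateCol_ne (Finset.ne_of_mem_erase hi)]

lemma updateCol_comm {n : ℕ} (M : Matrix (Fin n) (Fin n) ℂ[X]) {i j : Fin n} (h : i ≠ j)
    (u v : Fin n → ℂ[X]) :
    (M.updateCol i u).updateCol j v = (M.updateCol j v).updateCol i u := by
  ext a b
  simp only [Matrix.updateCol_apply]
  split_ifs with h1 h2 h2 <;>
    first
      | rfl
      | (exact absurd (h2.symm.trans h1) h)
      | (exact absurd (h1.symm.trans h2) h)
      | (exact absurd (h2.symm.trans h1) (Ne.symm h))
      | (exact absurd (h1.symm.trans h2) (Ne.symm h))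

set_option maxHeartbeats 1000000 in
set_option synthInstance.maxHeartbeats 400000 in
lemma dodgson {m : ℕ} (M : Matrix (Fin (m+2)) (Fin (m+2)) ℂ[X]) (hM : M.det ≠ 0) :
    (M.updateRow 0 (Pi.single 0 1)).det * (M.updateRow 1 (Pi.single 1 1)).det
      - (M.updateRow 0 (Pi.single 1 1)).det * (M.updateRow 1 (Pi.single 0 1)).det
    = M.det * (M.submatrix (fun i : Fin m => (⟨(i:ℕ)+2, by omega⟩ : Fin (m+2)))
        (fun j : Fin m => (⟨(j:ℕ)+2, by omega⟩ : Fin (m+2)))).det := by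
  classical
  have h01 : (0 : Fin (m+2)) ≠ 1 := by simp [Fin.ext_iff]
  set e := M.det with he
  set C : Matrix (Fin (m+2)) (Fin (m+2)) ℂ[X] :=
    ((1 : Matrix (Fin (m+2)) (Fin (m+2)) ℂ[X]).updateCol 0 (fun k => M.adjugate k 0)).updateCol 1
      (fun k => M.adjugate k 1) with hCdef
  have hdetC : C.det = M.adjugate 0 0 * M.adjugate 1 1 - M.adjugate 1 0 * M.adjugate 0 1 :=
    det_one_update_two m _ _
  -- M * C
  have hMC : M * C = (M.updateCol 0 (e • (Pi.single 0 1 : Fin (m+2) → ℂ[X]))).updateCol 1 (e • (Pi.single 1 1 : Fin (m+2) → ℂ[X])) := by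
    refine Matrix.ext fun k l => ?_
    rw [Matrix.mul_apply]
    by_cases h1 : l = 1
    · subst h1
      have : ∀ x, C x 1 = M.adjugate x 1 := fun x => Matrix.updateCol_self
      simp_rw [this]
      have : ∑ x, M k x * M.adjugate x 1 = (M * M.adjugate) k 1 := (Matrix.mul_apply).symm
      rw [this, Matrix.mul_adjugate]
      simp [Matrix.one_apply, Pi.single_apply, he]
    · by_cases h0 : l = 0
      · subst h0
        have : ∀ x, C x 0 = M.adjugate x 0 := fun x => by
          rw [hCdef, Matrix.updateCol_ne h01, Matrix.updateCol_self]
        simp_rw [this]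
        have : ∑ x, M k x * M.adjugate x 0 = (M * M.adjugate) k 0 := (Matrix.mul_apply).symm
        rw [this, Matrix.mul_adjugate]
        simp [Matrix.one_apply, Pi.single_apply, h1, he]
      · have : ∀ x, C x l = (1 : Matrix (Fin (m+2)) (Fin (m+2)) ℂ[X]) x l := fun x => by
          rw [hCdef, Matrix.updateCol_ne h1, Matrix.updateCol_ne h0]
        simp_rw [this]
        rw [Matrix.updateCol_ne h1, Matrix.updateCol_ne h0]
        simp [Matrix.one_apply]
  -- determinant of RHS
  have hsmul : ((M.updateCol 0 (e • (Pi.single 0 1 : Fin (m+2) → ℂ[X]))).updateCol 1 (e • (Pi.single 1 1 : Fin (m+2) → ℂ[X]))).det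
      = e * (e * ((M.updateCol 0 (Pi.single 0 1)).updateCol 1 (Pi.single 1 1)).det) := by
    rw [Matrix.det_updateCol_smul]
    rw [updateCol_comm _ h01, Matrix.det_updateCol_smul, updateCol_comm _ h01.symm]
  -- reduce the double basis-column determinant to the inner minor
  have hinner : ((M.updateCol 0 (Pi.single 0 1)).updateCol 1 (Pi.single 1 1)).det
      = (M.submatrix (fun i : Fin m => (⟨(i:ℕ)+2, by omega⟩ : Fin (m+2)))
          (fun j : Fin m => (⟨(j:ℕ)+2, by omega⟩ : Fin (m+2)))).det := by
    have hcol0 : ∀ i, ((M.updateCol 0 (Pi.single 0 1)).updateCol 1 (Pi.single 1 1)) i 0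
        = if i = 0 then 1 else 0 := by
      intro i
      rw [Matrix.updateCol_ne h01, Matrix.updateCol_self, Pi.single_apply]
    rw [det_eq_of_column_single _ 0 0 hcol0]
    have hsub1 : ((M.updateCol 0 (Pi.single 0 1)).updateCol 1 (Pi.single 1 1)).submatrix
          (Fin.succAbove 0) (Fin.succAbove 0)
        = (M.submatrix Fin.succ Fin.succ).updateCol 0 (Pi.single 0 1) := by
      refine Matrix.ext fun i j => ?_
      simp only [Matrix.submatrix_apply, Fin.succAbove_zero, Matrix.updateCol_apply,
        Pi.single_apply]
      split_ifs <;> (simp only [Fin.ext_iff, Fin.val_succ, Fin.val_zero, Fin.val_one] at *) <;> first | rfl | omega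
    rw [hsub1]
    have hcol0' : ∀ i, ((M.submatrix Fin.succ Fin.succ).updateCol 0 (Pi.single 0 1)) i 0
        = if i = 0 then 1 else 0 := by
      intro i
      rw [Matrix.updateCol_self, Pi.single_apply]
    rw [det_eq_of_column_single _ 0 0 hcol0']
    have hsub2 : ((M.submatrix Fin.succ Fin.succ).updateCol 0 (Pi.single 0 1)).submatrix
          (Fin.succAbove 0) (Fin.succAbove 0)
        = M.submatrix (fun i : Fin m => (⟨(i:ℕ)+2, by omega⟩ : Fin (m+2)))
            (fun j : Fin m => (⟨(j:ℕ)+2, by omega⟩ : Fin (m+2))) := by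
      refine Matrix.ext fun i j => ?_
      simp only [Matrix.submatrix_apply, Fin.succAbove_zero]
      rw [Matrix.updateCol_ne (show Fin.succ j ≠ 0 from by simp [Fin.ext_iff])]
      simp only [Matrix.submatrix_apply]
      have e1 : i.succ.succ = (⟨(i:ℕ)+2, by omega⟩ : Fin (m+2)) := by apply Fin.ext; simp
      have e2 : j.succ.succ = (⟨(j:ℕ)+2, by omega⟩ : Fin (m+2)) := by apply Fin.ext; simp
      rw [e1, e2]
    rw [hsub2]
    simp
  -- put it together
  have hdetMC : e * C.det = e * (e * (M.submatrix (fun i : Fin m => (⟨(i:ℕ)+2, by omega⟩ : Fin (m+2)))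
      (fun j : Fin m => (⟨(j:ℕ)+2, by omega⟩ : Fin (m+2)))).det) := by
    rw [← Matrix.det_mul, hMC, hsmul, hinner]
  have hC : C.det = e * (M.submatrix (fun i : Fin m => (⟨(i:ℕ)+2, by omega⟩ : Fin (m+2)))
      (fun j : Fin m => (⟨(j:ℕ)+2, by omega⟩ : Fin (m+2)))).det :=
    mul_left_cancel₀ hM hdetMC
  rw [← hC, hdetC]
  rw [Matrix.adjugate_apply, Matrix.adjugate_apply, Matrix.adjugate_apply, Matrix.adjugate_apply]



lemma det_cast {r r' : ℕ} (h : r = r') (M : Matrix (Fin r) (Fin r) ℂ[X])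
    (M' : Matrix (Fin r') (Fin r') ℂ[X])
    (hM : ∀ (i j : Fin r'), M' i j = M (Fin.cast h.symm i) (Fin.cast h.symm j)) :
    M'.det = M.det := by
  subst h
  exact congrArg _ (Matrix.ext fun i j => hM i j)

lemma derivative_wronskian {m : ℕ} (g : Fin (m+1) → ℂ[X]) :
    derivative (wronskian g) =
      ((Matrix.of fun i j : Fin (m+1) =>
          (⇑derivative : ℂ[X] → ℂ[X])^[(j:ℕ)] (g i)).updateCol
        (Fin.last m) (fun i => (⇑derivative : ℂ[X] → ℂ[X])^[m+1] (g i))).det := by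
  rw [show _root_.wronskian g = (Matrix.of fun i j : Fin (m+1) =>
      (⇑derivative : ℂ[X] → ℂ[X])^[(j:ℕ)] (g i)).det from rfl,
    derivative_det, Finset.sum_eq_single (Fin.last m)]
  · refine congrArg Matrix.det (congrArg _ (funext fun i => ?_))
    show derivative ((⇑derivative)^[((Fin.last m : Fin (m+1)) : ℕ)] (g i)) = (⇑derivative)^[m+1] (g i)
    rw [Fin.val_last]
    exact (Function.iterate_succ_apply' derivative m (g i)).symm
  · intro j _ hj
    have hjm : (j : ℕ) < m := by
      have h1 := j.isLt
      have h2 : (j:ℕ) ≠ m := fun h => hj (Fin.ext (by simpa [Fin.val_last] using h))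
      omega
    refine Matrix.det_zero_of_column_eq
      (show j ≠ (⟨(j:ℕ)+1, by omega⟩ : Fin (m+1)) from by simp [Fin.ext_iff]) fun k => ?_
    rw [Matrix.updateCol_self, Matrix.updateCol_ne (show (⟨(j:ℕ)+1, by omega⟩ : Fin (m+1)) ≠ j from by simp [Fin.ext_iff])]
    exact (Function.iterate_succ_apply' derivative (j:ℕ) (g k)).symm
  · intro h; exact absurd (Finset.mem_univ _) h

def ordPerm (m : ℕ) : Equiv.Perm (Fin (m+2)) where
  toFun j := ⟨if (j:ℕ) = 0 then m+1 else if (j:ℕ) = 1 then m else (j:ℕ) - 2, by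
    have := j.isLt; split_ifs <;> omega⟩
  invFun k := ⟨if (k:ℕ) = m+1 then 0 else if (k:ℕ) = m then 1 else (k:ℕ)+2, by
    have := k.isLt; split_ifs <;> omega⟩
  left_inv j := by
    have := j.isLt
    apply Fin.ext
    simp only [Fin.val_mk]
    split_ifs <;> first | omega | exact (by assumption : False).elim
  right_inv k := by
    have := k.isLt
    apply Fin.ext
    simp only [Fin.val_mk]
    split_ifs <;> first | omega | exact (by assumption : False).elim

def tauPerm (m : ℕ) : Equiv.Perm (Fin (m+1)) where
  toFun j := ⟨if (j:ℕ) = 0 then m else (j:ℕ) - 1, by have := j.isLt; split_ifs <;> omega⟩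
  invFun k := ⟨if (k:ℕ) = m then 0 else (k:ℕ)+1, by have := k.isLt; split_ifs <;> omega⟩
  left_inv j := by
    have := j.isLt
    apply Fin.ext
    simp only [Fin.val_mk]
    split_ifs <;> first | omega | exact (by assumption : False).elim
  right_inv k := by
    have := k.isLt
    apply Fin.ext
    simp only [Fin.val_mk]
    split_ifs <;> first | omega | exact (by assumption : False).elim



lemma entry_congr {n : ℕ} (f : Fin n → ℂ[X]) {e1 e2 : ℕ} {v1 v2 : Fin n} (he : e1 = e2)
    (hv : v1 = v2) :
    (⇑derivative : ℂ[X] → ℂ[X])^[e1] (f v1) = (⇑derivative : ℂ[X] → ℂ[X])^[e2] (f v2) := by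
  rw [he, hv]

noncomputable def bigM (m a : ℕ) (f : Fin (a+1+m) → ℂ[X]) : Matrix (Fin (m+2)) (Fin (m+2)) ℂ[X] :=
  Matrix.of fun i j =>
    (⇑derivative : ℂ[X] → ℂ[X])^[if (j:ℕ) = 0 then m+1 else if (j:ℕ) = 1 then m else (j:ℕ)-2]
      (f ⟨a + (i:ℕ) - 1, by have := i.isLt; omega⟩)

noncomputable def wMatD (m a : ℕ) (f : Fin (a+1+m) → ℂ[X]) : Matrix (Fin (m+2)) (Fin (m+2)) ℂ[X] :=
  Matrix.of fun i j => (⇑derivative : ℂ[X] → ℂ[X])^[(j:ℕ)]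
    (f ⟨a + (i:ℕ) - 1, by have := i.isLt; omega⟩)

noncomputable def pMat (m a : ℕ) (f : Fin (a+1+m) → ℂ[X]) : Matrix (Fin (m+1)) (Fin (m+1)) ℂ[X] :=
  Matrix.of fun i j => (⇑derivative : ℂ[X] → ℂ[X])^[(j:ℕ)]
    (f ⟨a + (i:ℕ), by have := i.isLt; omega⟩)

noncomputable def gFun (m a : ℕ) (f : Fin (a+1+m) → ℂ[X]) (i : Fin (m+1)) : ℂ[X] :=
  if (i:ℕ) = 0 then f ⟨a - 1, by omega⟩ else f ⟨a + (i:ℕ), by have := i.isLt; omega⟩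

noncomputable def zMat (m a : ℕ) (f : Fin (a+1+m) → ℂ[X]) : Matrix (Fin (m+1)) (Fin (m+1)) ℂ[X] :=
  Matrix.of fun i j => (⇑derivative : ℂ[X] → ℂ[X])^[(j:ℕ)] (gFun m a f i)

lemma bigM_eq (m a : ℕ) (f : Fin (a+1+m) → ℂ[X]) :
    bigM m a f = (wMatD m a f).submatrix id ⇑(ordPerm m) := rfl

lemma det_wMatD (m a : ℕ) (ha : 1 ≤ a) (f : Fin (a+1+m) → ℂ[X]) :
    (wMatD m a f).det = wrTail f (a-1) := by
  rw [show wrTail f (a-1) = (Matrix.of fun i j : Fin (a+1+m - (a-1)) =>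
    (⇑derivative : ℂ[X] → ℂ[X])^[(j:ℕ)]
      (f ⟨a - 1 + (i:ℕ), by have := i.isLt; omega⟩)).det from rfl]
  refine det_cast (by omega) _ _ (fun i j => entry_congr f rfl (Fin.ext (by simp [Fin.coe_cast]; omega)))

lemma det_pMat (m a : ℕ) (f : Fin (a+1+m) → ℂ[X]) :
    (pMat m a f).det = wrTail f a := by
  rw [show wrTail f a = (Matrix.of fun i j : Fin (a+1+m - a) =>
    (⇑derivative : ℂ[X] → ℂ[X])^[(j:ℕ)]
      (f ⟨a + (i:ℕ), by have := i.isLt; omega⟩)).det from rfl]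
  exact det_cast (by omega) _ _ (fun i j => rfl)

lemma det_inner (m a : ℕ) (ha : 1 ≤ a) (f : Fin (a+1+m) → ℂ[X]) :
    ((bigM m a f).submatrix (fun i : Fin m => (⟨(i:ℕ)+2, by have := i.isLt; omega⟩ : Fin (m+2)))
      (fun j : Fin m => (⟨(j:ℕ)+2, by have := j.isLt; omega⟩ : Fin (m+2)))).det
    = wrTail f (a+1) := by
  rw [show wrTail f (a+1) = (Matrix.of fun i j : Fin (a+1+m - (a+1)) =>
    (⇑derivative : ℂ[X] → ℂ[X])^[(j:ℕ)]
      (f ⟨a + 1 + (i:ℕ), by have := i.isLt; omega⟩)).det from rfl]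
  refine det_cast (show a+1+m - (a+1) = m by omega) _ _ (fun i j => ?_)
  simp only [bigM, Matrix.submatrix_apply, Matrix.of_apply]
  refine entry_congr f ?_ (Fin.ext ?_)
  · simp only [Fin.coe_cast, Fin.val_mk]
    split_ifs <;> first | omega | exact (by assumption : False).elim
  · simp only [Fin.coe_cast, Fin.val_mk]
    omega

lemma succAbove_val' {n : ℕ} (p : Fin (n+1)) (i : Fin n) :
    ((p.succAbove i : Fin (n+1)) : ℕ) = if (i : ℕ) < (p : ℕ) then (i : ℕ) else (i : ℕ) + 1 := by
  rw [Fin.succAbove]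
  split_ifs with h1 h2 h2
  · rfl
  · exact absurd (by simpa [Fin.lt_def] using h1) h2
  · exact absurd (by simpa [Fin.lt_def] using h2) h1
  · rfl

lemma entry_congr' {e1 e2 : ℕ} (he : e1 = e2) {p q : ℂ[X]} (hpq : p = q) :
    (⇑derivative : ℂ[X] → ℂ[X])^[e1] p = (⇑derivative : ℂ[X] → ℂ[X])^[e2] q := by
  rw [he, hpq]

variable {m a : ℕ}

lemma subPP (ha : 1 ≤ a) (f : Fin (a+1+m) → ℂ[X]) :
    (bigM m a f).submatrix Fin.succ Fin.succ = (pMat m a f).submatrix id ⇑(tauPerm m) := by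
  refine Matrix.ext fun i j => ?_
  simp only [bigM, pMat, Matrix.submatrix_apply, Matrix.of_apply, id_eq]
  refine entry_congr' ?_ (congrArg f (Fin.ext ?_))
  · simp only [tauPerm, Equiv.coe_fn_mk, Fin.val_mk, Fin.val_succ]
    split_ifs <;> first | omega | exact (by assumption : False).elim
  · simp only [Fin.val_succ, Fin.val_mk]
    omega

lemma subPP' (ha : 1 ≤ a) (f : Fin (a+1+m) → ℂ[X]) :
    (bigM m a f).submatrix Fin.succ (Fin.succAbove 1)
      = ((pMat m a f).updateCol (Fin.last m)
          (fun i => (⇑derivative : ℂ[X] → ℂ[X])^[m+1]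
            (f ⟨a + (i:ℕ), by have := i.isLt; omega⟩))).submatrix id ⇑(tauPerm m) := by
  refine Matrix.ext fun i j => ?_
  simp only [bigM, pMat, Matrix.submatrix_apply, Matrix.of_apply, id_eq,
    Matrix.updateCol_apply]
  by_cases hj : (j : ℕ) = 0
  · have hτ : (tauPerm m) j = Fin.last m := by
      apply Fin.ext; simp [tauPerm, hj, Fin.val_last, -Fin.val_eq_zero_iff]
    rw [hτ, if_pos rfl]
    refine entry_congr' ?_ (congrArg f (Fin.ext ?_))
    · have : ((Fin.succAbove 1 j : Fin (m+2)) : ℕ) = 0 := by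
        rw [succAbove_val']; simp [hj]
      simp [this]
    · simp only [Fin.val_succ, Fin.val_mk]; omega
  · have hτv : (((tauPerm m) j : Fin (m+1)) : ℕ) = (j:ℕ) - 1 := by
      simp [tauPerm, hj, -Fin.val_eq_zero_iff]
    have hτ : (tauPerm m) j ≠ Fin.last m := by
      intro hEq
      rw [Fin.ext_iff, hτv, Fin.val_last] at hEq
      have := j.isLt; omega
    rw [if_neg hτ]
    refine entry_congr' ?_ (congrArg f (Fin.ext ?_))
    · have hsv : ((Fin.succAbove 1 j : Fin (m+2)) : ℕ) = (j:ℕ) + 1 := by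
        rw [succAbove_val']; simp [-Fin.val_eq_zero_iff]; omega
      have hlm : ((Fin.last m) : ℕ) = m := Fin.val_last m
      rw [hsv, hτv]
      split_ifs <;> first | omega | exact (by assumption : False).elim
    · simp only [Fin.val_succ, Fin.val_mk]; omega

lemma subZZ (ha : 1 ≤ a) (f : Fin (a+1+m) → ℂ[X]) :
    (bigM m a f).submatrix (Fin.succAbove 1) Fin.succ
      = (zMat m a f).submatrix id ⇑(tauPerm m) := by
  refine Matrix.ext fun i j => ?_
  simp only [bigM, zMat, Matrix.submatrix_apply, Matrix.of_apply, id_eq]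
  refine entry_congr' ?_ ?_
  · simp only [tauPerm, Equiv.coe_fn_mk, Fin.val_mk, Fin.val_succ]
    split_ifs <;> first | omega | exact (by assumption : False).elim
  · by_cases hi : (i : ℕ) = 0
    · have hsv : ((Fin.succAbove 1 i : Fin (m+2)) : ℕ) = 0 := by
        rw [succAbove_val']; simp [hi]
      rw [gFun, if_pos hi]
      exact congrArg f (Fin.ext (by simp only [Fin.val_mk, hsv]; omega))
    · have hsv : ((Fin.succAbove 1 i : Fin (m+2)) : ℕ) = (i:ℕ) + 1 := by
        rw [succAbove_val']; simp [-Fin.val_eq_zero_iff]; omega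
      rw [gFun, if_neg hi]
      exact congrArg f (Fin.ext (by simp only [Fin.val_mk, hsv]; omega))

lemma subZZ' (ha : 1 ≤ a) (f : Fin (a+1+m) → ℂ[X]) :
    (bigM m a f).submatrix (Fin.succAbove 1) (Fin.succAbove 1)
      = ((zMat m a f).updateCol (Fin.last m)
          (fun i => (⇑derivative : ℂ[X] → ℂ[X])^[m+1] (gFun m a f i))).submatrix
        id ⇑(tauPerm m) := by
  refine Matrix.ext fun i j => ?_
  simp only [bigM, zMat, Matrix.submatrix_apply, Matrix.of_apply, id_eq,
    Matrix.updateCol_apply]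
  have hrow : f ⟨a + ((Fin.succAbove 1 i : Fin (m+2)) : ℕ) - 1, by
      have := (Fin.succAbove 1 i).isLt; omega⟩ = gFun m a f i := by
    by_cases hi : (i : ℕ) = 0
    · have hsv : ((Fin.succAbove 1 i : Fin (m+2)) : ℕ) = 0 := by
        rw [succAbove_val']; simp [hi]
      rw [gFun, if_pos hi]
      exact congrArg f (Fin.ext (by simp only [Fin.val_mk, hsv]; omega))
    · have hsv : ((Fin.succAbove 1 i : Fin (m+2)) : ℕ) = (i:ℕ) + 1 := by
        rw [succAbove_val']; simp [-Fin.val_eq_zero_iff]; omega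
      rw [gFun, if_neg hi]
      exact congrArg f (Fin.ext (by simp only [Fin.val_mk, hsv]; omega))
  by_cases hj : (j : ℕ) = 0
  · have hτ : (tauPerm m) j = Fin.last m := by
      apply Fin.ext; simp [tauPerm, hj, Fin.val_last, -Fin.val_eq_zero_iff]
    rw [hτ, if_pos rfl]
    refine entry_congr' ?_ hrow
    have : ((Fin.succAbove 1 j : Fin (m+2)) : ℕ) = 0 := by
      rw [succAbove_val']; simp [hj]
    simp [this]
  · have hτv : (((tauPerm m) j : Fin (m+1)) : ℕ) = (j:ℕ) - 1 := by
      simp [tauPerm, hj, -Fin.val_eq_zero_iff]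
    have hτ : (tauPerm m) j ≠ Fin.last m := by
      intro hEq
      rw [Fin.ext_iff, hτv, Fin.val_last] at hEq
      have := j.isLt; omega
    rw [if_neg hτ]
    refine entry_congr' ?_ hrow
    have hsv : ((Fin.succAbove 1 j : Fin (m+2)) : ℕ) = (j:ℕ) + 1 := by
      rw [succAbove_val']; simp [-Fin.val_eq_zero_iff]; omega
    have hlm : ((Fin.last m) : ℕ) = m := Fin.val_last m
    rw [hsv, hτv]
    split_ifs <;> first | omega | exact (by assumption : False).elim

lemma key' (m a : ℕ) (ha : 1 ≤ a) (f : Fin (a+1+m) → ℂ[X]) (hW : wrTail f (a-1) ≠ 0) :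
    ∃ s Z : ℂ[X], (s = 1 ∨ s = -1) ∧
      wrTail f a * derivative Z - derivative (wrTail f a) * Z
        = s * (wrTail f (a-1) * wrTail f (a+1)) := by
  classical
  obtain ⟨s2, hs2, hs2e⟩ : ∃ s : ℂ[X], (s = 1 ∨ s = -1) ∧
      (((Equiv.Perm.sign (ordPerm m) : ℤˣ) : ℤ) : ℂ[X]) = s := by
    rcases Int.units_eq_one_or (Equiv.Perm.sign (ordPerm m)) with h | h
    · exact ⟨1, Or.inl rfl, by rw [h]; norm_num⟩
    · exact ⟨-1, Or.inr rfl, by rw [h]; norm_num⟩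
  obtain ⟨s1, hs1, hs1e⟩ : ∃ s : ℂ[X], (s = 1 ∨ s = -1) ∧
      (((Equiv.Perm.sign (tauPerm m) : ℤˣ) : ℤ) : ℂ[X]) = s := by
    rcases Int.units_eq_one_or (Equiv.Perm.sign (tauPerm m)) with h | h
    · exact ⟨1, Or.inl rfl, by rw [h]; norm_num⟩
    · exact ⟨-1, Or.inr rfl, by rw [h]; norm_num⟩
  have hdetM : (bigM m a f).det = s2 * wrTail f (a-1) := by
    rw [bigM_eq m a f, Matrix.det_permute', det_wMatD m a ha f, hs2e]
  have hMne : (bigM m a f).det ≠ 0 := by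
    rw [hdetM]
    rcases hs2 with h|h <;> rw [h] <;> simpa using hW
  have hdP : derivative ((pMat m a f).det)
      = ((pMat m a f).updateCol (Fin.last m)
          (fun i => (⇑derivative : ℂ[X] → ℂ[X])^[m+1]
            (f ⟨a + (i:ℕ), by have := i.isLt; omega⟩))).det :=
    derivative_wronskian (fun i : Fin (m+1) => f ⟨a + (i:ℕ), by have := i.isLt; omega⟩)
  have hdZ : derivative ((zMat m a f).det)
      = ((zMat m a f).updateCol (Fin.last m)
          (fun i => (⇑derivative : ℂ[X] → ℂ[X])^[m+1] (gFun m a f i))).det :=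
    derivative_wronskian (gFun m a f)
  have h00 : ((bigM m a f).updateRow 0 (Pi.single 0 1)).det = s1 * (pMat m a f).det := by
    rw [det_eq_of_row_single _ 0 0
      (fun j => by rw [Matrix.updateRow_self, Pi.single_apply]),
      Matrix.submatrix_updateRow_succAbove, Fin.succAbove_zero, subPP ha f,
      Matrix.det_permute', hs1e]
    norm_num
  have h10 : ((bigM m a f).updateRow 0 (Pi.single 1 1)).det
      = -(s1 * ((pMat m a f).updateCol (Fin.last m)
          (fun i => (⇑derivative : ℂ[X] → ℂ[X])^[m+1]
            (f ⟨a + (i:ℕ), by have := i.isLt; omega⟩))).det) := by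
    rw [det_eq_of_row_single _ 0 1
      (fun j => by rw [Matrix.updateRow_self, Pi.single_apply]),
      Matrix.submatrix_updateRow_succAbove, Fin.succAbove_zero, subPP' ha f,
      Matrix.det_permute', hs1e]
    norm_num
  have h01 : ((bigM m a f).updateRow 1 (Pi.single 0 1)).det = -(s1 * (zMat m a f).det) := by
    rw [det_eq_of_row_single _ 1 0
      (fun j => by rw [Matrix.updateRow_self, Pi.single_apply]),
      Matrix.submatrix_updateRow_succAbove, Fin.succAbove_zero, subZZ ha f,
      Matrix.det_permute', hs1e]
    norm_num
  have h11 : ((bigM m a f).updateRow 1 (Pi.single 1 1)).det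
      = s1 * ((zMat m a f).updateCol (Fin.last m)
          (fun i => (⇑derivative : ℂ[X] → ℂ[X])^[m+1] (gFun m a f i))).det := by
    rw [det_eq_of_row_single _ 1 1
      (fun j => by rw [Matrix.updateRow_self, Pi.single_apply]),
      Matrix.submatrix_updateRow_succAbove, subZZ' ha f,
      Matrix.det_permute', hs1e]
    norm_num
  have hd := dodgson (bigM m a f) hMne
  rw [h00, h11, h10, h01, det_inner m a ha f, hdetM] at hd
  refine ⟨s2, (zMat m a f).det, hs2, ?_⟩
  rw [← det_pMat m a f, hdP, hdZ]
  rcases hs1 with h|h <;> subst h <;> linear_combination hd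


lemma key {N : ℕ} (a : ℕ) (ha : 1 ≤ a) (haN : a < N) (f : Fin N → ℂ[X])
    (hW : wrTail f (a-1) ≠ 0) :
    ∃ s Z : ℂ[X], (s = 1 ∨ s = -1) ∧
      wrTail f a * derivative Z - derivative (wrTail f a) * Z
        = s * (wrTail f (a-1) * wrTail f (a+1)) := by
  obtain ⟨m, rfl⟩ : ∃ m, N = a+1+m := ⟨N-a-1, by omega⟩
  exact key' m a ha f hW

lemma wrTail_self {N : ℕ} (f : Fin N → ℂ[X]) : wrTail f N = 1 := by
  have : IsEmpty (Fin (N - N)) := by rw [Nat.sub_self]; infer_instance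
  exact Matrix.det_isEmpty

lemma eval_derivative_prod_ne {ι : Type*} [DecidableEq ι] (s : Finset ι) (u : ι → ℂ) (t : ℂ)
    (h : ∀ j ∈ s, t ≠ u j) :
    Polynomial.eval t (derivative (∏ j ∈ s, (X - C (u j))))
      = Polynomial.eval t (∏ j ∈ s, (X - C (u j))) * ∑ j ∈ s, (t - u j)⁻¹ := by
  rw [derivative_finset_prod, Polynomial.eval_finset_sum, Finset.mul_sum]
  refine Finset.sum_congr rfl fun j hj => ?_
  rw [Polynomial.eval_mul]
  have hd : Polynomial.eval t (derivative (X - C (u j))) = 1 := by simp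
  rw [hd, mul_one]
  have hfac : (∏ k ∈ s, (X - C (u k))) = (X - C (u j)) * ∏ k ∈ s.erase j, (X - C (u k)) :=
    (Finset.mul_prod_erase s _ hj).symm
  rw [hfac, Polynomial.eval_mul]
  have he : Polynomial.eval t (X - C (u j)) = t - u j := by simp
  rw [he, mul_comm (t - u j), mul_assoc, mul_inv_cancel₀ (sub_ne_zero.2 (h j hj)), mul_one]

end BAEHelpers

/-- the root coordinates of a generic `X ∈ Ω_λ` satisfy the Bethe
ansatz equations. Here `y a` is the monic polynomial proportional to
`Wr(f_{a+1},…,f_N)` (with `f` the flag basis of `X`), `t a` are its roots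
(simple, by genericity), and consecutive `y`'s have no common roots. -/
theorem statement5 (N : ℕ) (hN : 1 ≤ N) (lam : Fin N → ℕ) (hlam : Antitone lam)
    (X : Submodule ℂ (Polynomial ℂ)) (hX : X ∈ Omega N lam)
    (f : Fin N → Polynomial ℂ) (hf : IsFlagBasis N lam X f)
    (y : ℕ → Polynomial ℂ)
    (hy : ∀ a < N, (y a).Monic ∧ ∃ c : ℂ, c ≠ 0 ∧ wrTail f a = Polynomial.C c * y a)
    (t : (a : ℕ) → Fin (lseq N lam a) → ℂ)
    (ht : ∀ a < N, y a = ∏ j : Fin (lseq N lam a), (Polynomial.X - Polynomial.C (t a j)))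
    (hsimple : ∀ a < N, Function.Injective (t a))
    (hdisj : ∀ a : ℕ, 1 ≤ a → a < N →
      ∀ (j : Fin (lseq N lam a)) (j' : Fin (lseq N lam (a - 1))), t a j ≠ t (a - 1) j') :
    BAE N lam t := by
  intro a ha haN j
  classical
  obtain ⟨hmona, ca, hca, hwa⟩ := hy a haN
  obtain ⟨hmonam, cam, hcam, hwam⟩ := hy (a-1) (by omega)
  -- the polynomial for level a+1 (equal to 1 if a+1 = N)
  obtain ⟨yp, cp, hcp, hwp, hype, hypd⟩ :
      ∃ (yp : ℂ[X]) (cp : ℂ), cp ≠ 0 ∧ wrTail f (a+1) = C cp * yp ∧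
        Polynomial.eval (t a j) yp ≠ 0 ∧
        Polynomial.eval (t a j) (derivative yp) = Polynomial.eval (t a j) yp *
          ∑ j' : Fin (lseq N lam (a+1)), (t a j - t (a+1) j')⁻¹ := by
    by_cases hlt : a + 1 < N
    · obtain ⟨hm, c, hc, hw⟩ := hy (a+1) hlt
      have hne : ∀ j' : Fin (lseq N lam (a+1)), t a j ≠ t (a+1) j' := by
        intro j'
        have h2 := hdisj (a+1) (by omega) hlt j' j
        exact fun hEq => h2 hEq.symm
      refine ⟨y (a+1), c, hc, hw, ?_, ?_⟩
      · rw [ht (a+1) hlt, Polynomial.eval_prod]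
        refine Finset.prod_ne_zero_iff.2 fun j' _ => ?_
        simp only [Polynomial.eval_sub, Polynomial.eval_X, Polynomial.eval_C]
        exact sub_ne_zero.2 (hne j')
      · rw [ht (a+1) hlt]
        exact eval_derivative_prod_ne _ _ _ (fun j' _ => hne j')
    · have hN1 : a + 1 = N := by omega
      have hl0 : lseq N lam (a+1) = 0 := by
        rw [hN1]
        unfold lseq
        rw [show Finset.univ.filter (fun b : Fin N => N ≤ (b : ℕ)) = ∅ from
          Finset.filter_false_of_mem (fun b _ => by have := b.isLt; omega)]
        simp
      haveI hEmp : IsEmpty (Fin (lseq N lam (a+1))) := by rw [hl0]; infer_instance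
      refine ⟨1, 1, one_ne_zero, ?_, by simp, by simp⟩
      rw [hN1, wrTail_self, map_one, one_mul]
  -- apply the Wronskian identity
  have hqne : wrTail f (a-1) ≠ 0 := by
    rw [hwam]
    exact mul_ne_zero (Polynomial.C_ne_zero.2 hcam) hmonam.ne_zero
  obtain ⟨s, Z, hs, hkey⟩ := key a ha haN f hqne
  obtain ⟨ε, hε, hsC⟩ : ∃ ε : ℂ, ε ≠ 0 ∧ s = C ε := by
    rcases hs with h|h
    · exact ⟨1, one_ne_zero, by rw [h, map_one]⟩
    · exact ⟨-1, by norm_num, by rw [h, map_neg, map_one]⟩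
  rw [hwa, hwam, hwp, hsC] at hkey
  have E1 : C ca * (y a * derivative Z - derivative (y a) * Z)
      = C (ε * cam * cp) * (y (a-1) * yp) := by
    rw [show derivative (C ca * y a) = C ca * derivative (y a) from by
      rw [derivative_mul, derivative_C, zero_mul, zero_add]] at hkey
    simp only [map_mul]
    linear_combination hkey
  have E2 : C ca * (y a * derivative (derivative Z) - derivative (derivative (y a)) * Z)
      = C (ε * cam * cp) * (derivative (y (a-1)) * yp + y (a-1) * derivative yp) := by
    have hD := congrArg derivative E1
    simp only [derivative_sub, derivative_mul, derivative_add, derivative_C, zero_mul, zero_add] at hD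
    linear_combination hD
  -- local root data at t0 := t a j
  have hpa : y a = (Polynomial.X - Polynomial.C (t a j)) * ∏ j' ∈ Finset.univ.erase j, (Polynomial.X - Polynomial.C (t a j')) := by
    rw [ht a haN]
    exact (Finset.mul_prod_erase _ _ (Finset.mem_univ j)).symm
  have hre : Polynomial.eval (t a j) (∏ j' ∈ Finset.univ.erase j, (Polynomial.X - Polynomial.C (t a j'))) ≠ 0 := by
    rw [Polynomial.eval_prod]
    refine Finset.prod_ne_zero_iff.2 fun j' hj' => ?_
    simp only [Polynomial.eval_sub, Polynomial.eval_X, Polynomial.eval_C]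
    refine sub_ne_zero.2 fun hEq => (Finset.ne_of_mem_erase hj') ?_
    exact hsimple a haN hEq.symm
  have hrd : Polynomial.eval (t a j) (derivative (∏ j' ∈ Finset.univ.erase j, (Polynomial.X - Polynomial.C (t a j'))))
      = Polynomial.eval (t a j) (∏ j' ∈ Finset.univ.erase j, (Polynomial.X - Polynomial.C (t a j'))) *
        ∑ j' ∈ Finset.univ.erase j, (t a j - t a j')⁻¹ := by
    refine eval_derivative_prod_ne _ _ _ fun j' hj' => ?_
    exact fun hEq => (Finset.ne_of_mem_erase hj') (hsimple a haN hEq.symm)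
  have hyaev : Polynomial.eval (t a j) (y a) = 0 := by rw [hpa]; simp
  have hdya : Polynomial.eval (t a j) (derivative (y a))
      = Polynomial.eval (t a j) (∏ j' ∈ Finset.univ.erase j, (Polynomial.X - Polynomial.C (t a j'))) := by
    rw [hpa, derivative_mul]
    simp
  have hddya : Polynomial.eval (t a j) (derivative (derivative (y a)))
      = 2 * Polynomial.eval (t a j) (derivative (∏ j' ∈ Finset.univ.erase j, (Polynomial.X - Polynomial.C (t a j')))) := by
    rw [hpa, derivative_mul, derivative_add, derivative_mul, derivative_mul]
    simp only [derivative_sub, derivative_X, derivative_C, derivative_one, sub_zero, one_mul,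
      zero_mul, Polynomial.eval_add, Polynomial.eval_mul, Polynomial.eval_sub, Polynomial.eval_X,
      Polynomial.eval_C, sub_self, zero_add, zero_mul, mul_zero]
    ring
  -- q := y (a-1)
  have hqev : Polynomial.eval (t a j) (y (a-1)) ≠ 0 := by
    rw [ht (a-1) (by omega), Polynomial.eval_prod]
    refine Finset.prod_ne_zero_iff.2 fun j' _ => ?_
    simp only [Polynomial.eval_sub, Polynomial.eval_X, Polynomial.eval_C]
    exact sub_ne_zero.2 (hdisj a ha haN j j')
  have hqd : Polynomial.eval (t a j) (derivative (y (a-1)))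
      = Polynomial.eval (t a j) (y (a-1)) *
        ∑ j' : Fin (lseq N lam (a-1)), (t a j - t (a-1) j')⁻¹ := by
    rw [ht (a-1) (by omega)]
    exact eval_derivative_prod_ne _ _ _ (fun j' _ => hdisj a ha haN j j')
  -- evaluate E1 and E2 at t a j
  have ev1 := congrArg (Polynomial.eval (t a j)) E1
  have ev2 := congrArg (Polynomial.eval (t a j)) E2
  simp only [Polynomial.eval_mul, Polynomial.eval_C, Polynomial.eval_sub, Polynomial.eval_add,
    hyaev, hdya, hddya, hqd, hypd, zero_mul] at ev1 ev2
  -- abbreviations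
  set R := Polynomial.eval (t a j) (∏ j' ∈ Finset.univ.erase j, (Polynomial.X - Polynomial.C (t a j'))) with hR
  set Rd := Polynomial.eval (t a j) (derivative (∏ j' ∈ Finset.univ.erase j, (Polynomial.X - Polynomial.C (t a j')))) with hRd
  set Q := Polynomial.eval (t a j) (y (a-1)) with hQ
  set Yp := Polynomial.eval (t a j) yp with hYp
  set Ze := Polynomial.eval (t a j) Z with hZe
  set S1 := ∑ j' : Fin (lseq N lam (a-1)), (t a j - t (a-1) j')⁻¹ with hS1
  set S2 := ∑ j' ∈ Finset.univ.erase j, (t a j - t a j')⁻¹ with hS2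
  set S3 := ∑ j' : Fin (lseq N lam (a+1)), (t a j - t (a+1) j')⁻¹ with hS3
  -- ev1 : ca * (0 - R * Ze) = ε*cam*cp * (Q * Yp)
  -- ev2 : ca * (0 - 2*Rd*Ze) = ε*cam*cp*(Q*S1*Yp + Q*(Yp*S3))
  have hKne : (ε * cam * cp) * (Q * Yp) ≠ 0 :=
    mul_ne_zero (mul_ne_zero (mul_ne_zero hε hcam) hcp) (mul_ne_zero hqev hype)
  have hfin : ((ε * cam * cp) * (Q * Yp)) * (2 * S2) = ((ε * cam * cp) * (Q * Yp)) * (S1 + S3) := by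
    linear_combination (-(2*S2)) * ev1 + ev2 + (2*ca*Ze) * hrd
  have hcancel : 2 * S2 = S1 + S3 := mul_left_cancel₀ hKne hfin
  -- rewrite the goal
  have hgoal2 : (∑ j' ∈ Finset.univ.filter (fun j' : Fin (lseq N lam a) => j' ≠ j),
      2 / (t a j - t a j')) = 2 * S2 := by
    rw [Finset.filter_ne', Finset.mul_sum]
    exact Finset.sum_congr rfl fun j' _ => by rw [div_eq_mul_inv]
  have hgoal1 : (∑ j' : Fin (lseq N lam (a-1)), 1 / (t a j - t (a-1) j')) = S1 := by
    exact Finset.sum_congr rfl fun j' _ => one_div _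
  have hgoal3 : (∑ j' : Fin (lseq N lam (a+1)), 1 / (t a j - t (a+1) j')) = S3 := by
    exact Finset.sum_congr rfl fun j' _ => one_div _
  rw [hgoal1, hgoal2, hgoal3]
  linear_combination -hcancel
end
end

section
/- Let t = (t^{(a)}_j), a = 0,…,N−1, j = 1,…,l_a, be complex numbers such that within each level a the numbers t^{(a)}_1,…,t^{(a)}_{l_a} are pairwise distinct, for each a = 1,…,N−1 the sets {t^{(a−1)}_{j'}} and {t^{(a)}_j} are disjoint, and t satisfies the Bethe ansatz equations (these conditions hold precisely when t are the root coordinates of a generic X ∈ Ω_λ). Then the value ω(t) of the universal weight function is a singular vector of weight λ in (ℂ^N)^{⊗n}: e_{ab}·ω(t) = 0 for all 1 ≤ a < b ≤ N, and e_{aa}·ω(t) = λ_a·ω(t) for all a = 1,…,N. -/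
open Polynomial

noncomputable section

/-- A sequence `J : Fin n → Fin N` (0-based values: `J s = j_s − 1`) is `l`-admissible:
`#{s | j_s > i} = l i` for `i = 1, …, N−1`. -/
def IsAdmissible (N : ℕ) (lam : Fin N → ℕ) (J : Fin (lseq N lam 0) → Fin N) : Prop :=
  ∀ i ∈ Finset.Ico 1 N, (Finset.univ.filter fun s => i ≤ ((J s : ℕ))).card = lseq N lam i

instance (N : ℕ) (lam : Fin N → ℕ) (J : Fin (lseq N lam 0) → Fin N) :
    Decidable (IsAdmissible N lam J) := by
  unfold IsAdmissible; infer_instance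

/-- The set `B(J)` of tuples `β = (β_1, …, β_{N−1})` of bijections
`β_i : S_i(J) → {1, …, l i}`, where `S_i(J) = {s | j_s > i}`; here `k : Fin (N−1)`
encodes the level `i = k + 1`. -/
def BType (N : ℕ) (lam : Fin N → ℕ) (J : Fin (lseq N lam 0) → Fin N) : Type :=
  ∀ k : Fin (N - 1),
    {s : Fin (lseq N lam 0) // (k : ℕ) + 1 ≤ (J s : ℕ)} ≃ Fin (lseq N lam ((k : ℕ) + 1))

instance (N : ℕ) (lam : Fin N → ℕ) (J : Fin (lseq N lam 0) → Fin N) :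
    Fintype (BType N lam J) := by
  unfold BType; infer_instance

/-- `β_i(s)` (0-based), with the convention `β_0(s) = s`; junk value `0` outside
the meaningful range. -/
def bcoord (N : ℕ) (lam : Fin N → ℕ) (J : Fin (lseq N lam 0) → Fin N)
    (β : BType N lam J) (i : ℕ) (s : Fin (lseq N lam 0)) : ℕ :=
  if hi : i = 0 then (s : ℕ)
  else if h : i - 1 < N - 1 ∧ i ≤ (J s : ℕ) then (β ⟨i - 1, h.1⟩ ⟨s, by show i - 1 + 1 ≤ (J s : ℕ); omega⟩ : ℕ)
  else 0

/-- `t^{(a)}_j` accessed by a 0-based natural index `j`, with junk value `0` out of range. -/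
def tcoord (N : ℕ) (lam : Fin N → ℕ) (t : (a : ℕ) → Fin (lseq N lam a) → ℂ)
    (a j : ℕ) : ℂ :=
  if h : j < lseq N lam a then t a ⟨j, h⟩ else 0

/-- The universal weight function `ω(t) ∈ (ℂ^N)^{⊗n}`, the tensor power being modeled
as the space of functions `(Fin n → Fin N) → ℂ` on the standard basis indices; the
coefficient of `e_{j_1} ⊗ … ⊗ e_{j_n}` is
`ω_J(t) = ∑_{β ∈ B(J)} ∏_{s ∈ S(J)} ω_{s,β}(t)` for admissible `J` and `0` otherwise,
where `ω_{s,β}(t) = ∏_{i=1}^{j_s − 1} (t^{(i)}_{β_i(s)} − t^{(i−1)}_{β_{i−1}(s)})⁻¹`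
(the product over all `s` coincides with that over `s ∈ S(J)`, the extra factors
being empty products). -/
def weightFun (N : ℕ) (lam : Fin N → ℕ) (t : (a : ℕ) → Fin (lseq N lam a) → ℂ) :
    (Fin (lseq N lam 0) → Fin N) → ℂ :=
  fun J =>
    if IsAdmissible N lam J then
      ∑ β : BType N lam J, ∏ s : Fin (lseq N lam 0),
        ∏ i ∈ Finset.Icc 1 ((J s : ℕ)),
          (tcoord N lam t i (bcoord N lam J β i s) -
            tcoord N lam t (i - 1) (bcoord N lam J β (i - 1) s))⁻¹
    else 0

/-- The action of the matrix unit `e_{ab} ∈ gl_N` on `(ℂ^N)^{⊗n}`, modeled on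
coefficient functions: `(e_{ab}·v)(J) = ∑_{s : J s = a} v(J[s ↦ b])`. -/
def glAct (N n : ℕ) (a b : Fin N) (v : (Fin n → Fin N) → ℂ) : (Fin n → Fin N) → ℂ :=
  fun J => ∑ s : Fin n, if J s = a then v (Function.update J s b) else 0


-- ===== auxiliary machinery =====
set_option linter.unusedSectionVars false
set_option maxHeartbeats 1600000


section BSum

variable {ι κ : Type*} [DecidableEq ι] [DecidableEq κ] [Fintype ι] [Fintype κ]

/-- Sum over all bijections from `S` to `M` of products of matrix entries. -/
noncomputable def bsum (S : Finset ι) (M : Finset κ) (F : ι → κ → ℂ) : ℂ :=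
  ∑ γ : {y // y ∈ S} ≃ {z // z ∈ M}, ∏ y : {y // y ∈ S}, F y (γ y)

def ext1 {S : Finset ι} {M : Finset κ} {s : ι} (hs : s ∉ S) {m : κ} (hm : m ∈ M)
    (γ : {y // y ∈ S} ≃ {z // z ∈ M.erase m}) :
    {y // y ∈ insert s S} ≃ {z // z ∈ M} where
  toFun y := if h : (y : ι) = s then ⟨m, hm⟩ else
    ⟨(γ ⟨y, (Finset.mem_insert.mp y.2).resolve_left h⟩ : κ),
      Finset.mem_of_mem_erase (γ _).2⟩
  invFun z := if h : (z : κ) = m then ⟨s, Finset.mem_insert_self s S⟩ else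
    ⟨(γ.symm ⟨z, Finset.mem_erase.mpr ⟨h, z.2⟩⟩ : ι),
      Finset.mem_insert_of_mem (γ.symm _).2⟩
  left_inv y := by
    by_cases h : (y : ι) = s
    · simp only [dif_pos h, dif_pos rfl]
      exact Subtype.ext h.symm
    · simp only [dif_neg h]
      have hne : ((γ ⟨y, (Finset.mem_insert.mp y.2).resolve_left h⟩ : {z // z ∈ M.erase m}) : κ) ≠ m :=
        (Finset.mem_erase.mp (γ _).2).1
      simp only [dif_neg hne, Subtype.coe_eta, Equiv.symm_apply_apply]
  right_inv z := by
    by_cases h : (z : κ) = m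
    · simp only [dif_pos h, dif_pos rfl]
      exact Subtype.ext h.symm
    · simp only [dif_neg h]
      have hne : ((γ.symm ⟨z, Finset.mem_erase.mpr ⟨h, z.2⟩⟩ : {y // y ∈ S}) : ι) ≠ s :=
        fun hcon => hs (hcon ▸ (γ.symm _).2)
      simp only [dif_neg hne, Subtype.coe_eta, Equiv.apply_symm_apply]

def shrink1 {S : Finset ι} {M : Finset κ} {s : ι} (hs : s ∉ S) {m : κ} (hm : m ∈ M)
    (γ : {y // y ∈ insert s S} ≃ {z // z ∈ M})
    (hγ : γ ⟨s, Finset.mem_insert_self s S⟩ = ⟨m, hm⟩) :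
    {y // y ∈ S} ≃ {z // z ∈ M.erase m} where
  toFun y := ⟨γ ⟨y, Finset.mem_insert_of_mem y.2⟩, by
    refine Finset.mem_erase.mpr ⟨fun hcon => ?_, (γ _).2⟩
    have : γ ⟨(y : ι), Finset.mem_insert_of_mem y.2⟩ = γ ⟨s, Finset.mem_insert_self s S⟩ := by
      rw [hγ]; exact Subtype.ext hcon
    have h2 : (y : ι) = s := congrArg Subtype.val (γ.injective this)
    exact hs (h2 ▸ y.2)⟩
  invFun z := ⟨γ.symm ⟨z, Finset.mem_of_mem_erase z.2⟩, by
    rcases Finset.mem_insert.mp (γ.symm ⟨z, Finset.mem_of_mem_erase z.2⟩).2 with h | h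
    · exfalso
      have h1 : γ.symm ⟨(z : κ), Finset.mem_of_mem_erase z.2⟩ = ⟨s, Finset.mem_insert_self s S⟩ :=
        Subtype.ext h
      have h2 : (⟨(z : κ), Finset.mem_of_mem_erase z.2⟩ : {z // z ∈ M}) = ⟨m, hm⟩ := by
        rw [← hγ, ← h1, Equiv.apply_symm_apply]
      exact (Finset.mem_erase.mp z.2).1 (congrArg Subtype.val h2)
    · exact h⟩
  left_inv y := by
    apply Subtype.ext
    simp only [Subtype.coe_eta, Equiv.symm_apply_apply]
  right_inv z := by
    apply Subtype.ext
    simp only [Subtype.coe_eta, Equiv.apply_symm_apply]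

lemma bsum_insert {S : Finset ι} {s : ι} (hs : s ∉ S) (M : Finset κ) (F : ι → κ → ℂ) :
    bsum (insert s S) M F = ∑ m ∈ M, F s m * bsum S (M.erase m) F := by
  unfold bsum
  rw [← Finset.sum_fiberwise Finset.univ
    (fun γ : {y // y ∈ insert s S} ≃ {z // z ∈ M} => γ ⟨s, Finset.mem_insert_self s S⟩)
    (fun γ => ∏ y : {y // y ∈ insert s S}, F y (γ y))]
  rw [← Finset.sum_coe_sort M (fun m => F s m * ∑ γ : {y // y ∈ S} ≃ {z // z ∈ M.erase m},
      ∏ y : {y // y ∈ S}, F y (γ y))]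
  refine Finset.sum_congr rfl fun j _ => ?_
  rw [Finset.mul_sum]
  refine Finset.sum_bij' (fun γ hγ => shrink1 hs j.2 γ (by
      simpa using (Finset.mem_filter.mp hγ).2))
    (fun γ' _ => ext1 hs j.2 γ') ?_ ?_ ?_ ?_ ?_
  · intro γ hγ; exact Finset.mem_univ _
  · intro γ' _
    refine Finset.mem_filter.mpr ⟨Finset.mem_univ _, ?_⟩
    show ext1 hs j.2 γ' ⟨s, _⟩ = j
    simp only [ext1, Equiv.coe_fn_mk, dif_pos rfl]
    exact Subtype.ext rfl
  · intro γ hγ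
    have hγ2 : γ ⟨s, Finset.mem_insert_self s S⟩ = ⟨(j : κ), j.2⟩ := by
      simpa using (Finset.mem_filter.mp hγ).2
    ext y
    by_cases h : (y : ι) = s
    · simp only [ext1, shrink1, Equiv.coe_fn_mk, dif_pos h]
      have : y = ⟨s, Finset.mem_insert_self s S⟩ := Subtype.ext h
      rw [this, hγ2]
    · simp only [ext1, shrink1, Equiv.coe_fn_mk, dif_neg h, Subtype.coe_eta]
  · intro γ' _
    ext y
    have hy : (y : ι) ≠ s := fun hcon => hs (hcon ▸ y.2)
    simp only [ext1, shrink1, Equiv.coe_fn_mk, dif_neg hy, Subtype.coe_eta]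
  · intro γ hγ
    have hγ2 : γ ⟨s, Finset.mem_insert_self s S⟩ = ⟨(j : κ), j.2⟩ := by
      simpa using (Finset.mem_filter.mp hγ).2
    rw [Finset.univ_eq_attach, Finset.attach_insert, Finset.prod_insert (by
      intro hcon
      rcases Finset.mem_image.mp hcon with ⟨y, _, hy⟩
      have h2 : (y : ι) = s := congrArg Subtype.val hy
      exact hs (h2 ▸ y.2)), Finset.prod_image (by
      intro y _ z _ h
      exact Subtype.ext (congrArg (Subtype.val : {x // x ∈ insert s S} → ι) h))]
    congr 1
    rw [hγ2]

lemma bsum_comm (S : Finset ι) (M : Finset κ) (F : ι → κ → ℂ) :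
    bsum S M F = bsum M S (fun z y => F y z) := by
  unfold bsum
  refine Fintype.sum_equiv ⟨Equiv.symm, Equiv.symm, fun γ => γ.symm_symm, fun γ => γ.symm_symm⟩
    _ _ fun γ => ?_
  show ∏ y : {y // y ∈ S}, F ↑y ↑(γ y) = ∏ z : {z // z ∈ M}, F ↑(γ.symm z) ↑z
  rw [← Equiv.prod_comp γ (fun z => F ((γ.symm z) : ι) (z : κ))]
  simp

lemma bsum_erase {S : Finset ι} {M : Finset κ} {m : κ} (hm : m ∈ M) (F : ι → κ → ℂ) :
    bsum S M F = ∑ y ∈ S, F y m * bsum (S.erase y) (M.erase m) F := by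
  rw [bsum_comm, ← Finset.insert_erase hm, bsum_insert (Finset.notMem_erase m M)]
  rw [Finset.insert_erase hm]
  exact Finset.sum_congr rfl fun y _ => by rw [bsum_comm (S.erase y)]

end BSum

lemma pointwise1 {X Y c : ℂ} (hXY : X ≠ Y) (hXc : X ≠ c) (hYc : Y ≠ c) :
    (2 * (X - Y)⁻¹ - (X - c)⁻¹) * (Y - c)⁻¹ + (2 * (Y - X)⁻¹ - (Y - c)⁻¹) * (X - c)⁻¹ = 0 := by
  have h1 : X - Y ≠ 0 := sub_ne_zero.mpr hXY
  have h2 : Y - X ≠ 0 := sub_ne_zero.mpr (Ne.symm hXY)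
  have h3 : X - c ≠ 0 := sub_ne_zero.mpr hXc
  have h4 : Y - c ≠ 0 := sub_ne_zero.mpr hYc
  field_simp
  ring

lemma pointwise2 {X Y c w : ℂ} (hXY : X ≠ Y) (hXc : X ≠ c) (hYc : Y ≠ c)
    (hXw : X ≠ w) (hYw : Y ≠ w) :
    (2 * (X - Y)⁻¹ - ((X - c)⁻¹ + (X - w)⁻¹)) * ((Y - c)⁻¹ * (w - Y)⁻¹)
      + (2 * (Y - X)⁻¹ - ((Y - c)⁻¹ + (Y - w)⁻¹)) * ((X - c)⁻¹ * (w - X)⁻¹) = 0 := by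
  have h1 : X - Y ≠ 0 := sub_ne_zero.mpr hXY
  have h2 : Y - X ≠ 0 := sub_ne_zero.mpr (Ne.symm hXY)
  have h3 : X - c ≠ 0 := sub_ne_zero.mpr hXc
  have h4 : Y - c ≠ 0 := sub_ne_zero.mpr hYc
  have h5 : w - X ≠ 0 := sub_ne_zero.mpr hXw.symm
  have h6 : w - Y ≠ 0 := sub_ne_zero.mpr hYw.symm
  have h7 : X - w ≠ 0 := sub_ne_zero.mpr hXw
  have h8 : Y - w ≠ 0 := sub_ne_zero.mpr hYw
  field_simp
  ring

lemma key_s8 {ι : Type*} [Fintype ι] [DecidableEq ι] {L : ℕ} (p q : ℕ)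
    (x : Fin L → ℂ) (u v : ℕ → ℂ)
    (hx : Function.Injective x)
    (hxu : ∀ (m : Fin L) (k : ℕ), k < p → x m ≠ u k)
    (hxv : ∀ (m : Fin L) (k : ℕ), k < q → x m ≠ v k)
    (hbae : ∀ m : Fin L, (∑ k ∈ Finset.range p, (x m - u k)⁻¹)
        - (∑ m' ∈ Finset.univ.filter (fun m' => m' ≠ m), 2 * (x m - x m')⁻¹)
        + (∑ k ∈ Finset.range q, (x m - v k)⁻¹) = 0)
    (A T T' : Finset ι) (hAT : ∀ r ∈ A, r ∉ T) (hT' : T' ⊆ T)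
    (d e : ι → ℕ)
    (hd3 : ∀ r ∈ A ∪ T, d r < p)
    (hd1 : ∀ r₁ ∈ A ∪ T, ∀ r₂ ∈ A ∪ T, d r₁ = d r₂ → r₁ = r₂)
    (hd2 : ∀ k, k < p → ∃ r ∈ A ∪ T, d r = k)
    (he3 : ∀ r ∈ T', e r < q)
    (he1 : ∀ r₁ ∈ T', ∀ r₂ ∈ T', e r₁ = e r₂ → r₁ = r₂)
    (he2 : ∀ k, k < q → ∃ r ∈ T', e r = k) :
    ∑ s ∈ A, ∑ γ : {y // y ∈ insert s T} ≃ Fin L, ∏ y : {y // y ∈ insert s T},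
      ((x (γ y) - u (d ↑y))⁻¹ * if (↑y : ι) ∈ T' then (v (e ↑y) - x (γ y))⁻¹ else 1) = 0 := by
  classical
  set F : ι → Fin L → ℂ :=
    fun r m => (x m - u (d r))⁻¹ * if r ∈ T' then (v (e r) - x m)⁻¹ else 1 with hF
  set G : ι → Fin L → ℂ :=
    fun r m => (x m - u (d r))⁻¹ + if r ∈ T' then (x m - v (e r))⁻¹ else 0 with hG
  -- step 1 : rewrite inner sums as bsum
  have step1 : ∀ s ∈ A, (∑ γ : {y // y ∈ insert s T} ≃ Fin L, ∏ y : {y // y ∈ insert s T},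
      ((x (γ y) - u (d ↑y))⁻¹ * if (↑y : ι) ∈ T' then (v (e ↑y) - x (γ y))⁻¹ else 1))
      = bsum (insert s T) (Finset.univ : Finset (Fin L)) F := by
    intro s _
    unfold bsum
    exact Fintype.sum_equiv
      (Equiv.equivCongr (Equiv.refl _) (Equiv.subtypeUnivEquiv (fun m => Finset.mem_univ m)).symm)
      _ _ (fun γ => rfl)
  rw [Finset.sum_congr rfl step1, Finset.sum_congr rfl
    (fun s hs => bsum_insert (hAT s hs) Finset.univ F)]
  -- now : ∑ s ∈ A, ∑ m ∈ univ, F s m * bsum T (univ.erase m) F = 0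
  rw [Finset.sum_comm]
  have hFA : ∀ s ∈ A, ∀ m : Fin L, F s m = (x m - u (d s))⁻¹ := by
    intro s hs m
    have : s ∉ T' := fun h => hAT s hs (hT' h)
    simp [hF, this]
  have hsub : ∀ m : Fin L, (∑ s ∈ A, F s m)
      = (∑ m' ∈ Finset.univ.filter (fun m' => m' ≠ m), 2 * (x m - x m')⁻¹)
        - ∑ y ∈ T, G y m := by
    intro m
    have hAun : ∑ r ∈ A ∪ T, (x m - u (d r))⁻¹
        = ∑ s ∈ A, (x m - u (d s))⁻¹ + ∑ y ∈ T, (x m - u (d y))⁻¹ :=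
      Finset.sum_union (Finset.disjoint_left.mpr hAT)
    have hdu : ∑ r ∈ A ∪ T, (x m - u (d r))⁻¹ = ∑ k ∈ Finset.range p, (x m - u k)⁻¹ := by
      refine Finset.sum_bij (fun r _ => d r) (fun r hr => Finset.mem_range.mpr (hd3 r hr))
        hd1 ?_ (fun r _ => rfl)
      intro k hk
      obtain ⟨r, hr, hrk⟩ := hd2 k (Finset.mem_range.mp hk)
      exact ⟨r, hr, hrk⟩
    have hev : ∑ k ∈ Finset.range q, (x m - v k)⁻¹ = ∑ y ∈ T', (x m - v (e y))⁻¹ := by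
      refine (Finset.sum_bij (fun r _ => e r) (fun r hr => Finset.mem_range.mpr (he3 r hr))
        he1 ?_ (fun r _ => rfl)).symm
      intro k hk
      obtain ⟨r, hr, hrk⟩ := he2 k (Finset.mem_range.mp hk)
      exact ⟨r, hr, hrk⟩
    have hGT : ∑ y ∈ T, G y m
        = ∑ y ∈ T, (x m - u (d y))⁻¹ + ∑ y ∈ T', (x m - v (e y))⁻¹ := by
      rw [hG, Finset.sum_add_distrib]
      congr 1
      rw [Finset.sum_ite_mem]
      congr 1
      exact Finset.inter_eq_right.mpr hT'
    have hb := hbae m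
    have : ∑ s ∈ A, F s m = ∑ s ∈ A, (x m - u (d s))⁻¹ :=
      Finset.sum_congr rfl (fun s hs => hFA s hs m)
    rw [this]
    have h5 : ∑ s ∈ A, (x m - u (d s))⁻¹
        = ∑ k ∈ Finset.range p, (x m - u k)⁻¹ - ∑ y ∈ T, (x m - u (d y))⁻¹ := by
      rw [← hdu, hAun]; ring
    rw [h5, hGT]
    rw [hev] at hb
    linear_combination hb
  -- factor the A-sum
  have step2 : ∀ m : Fin L, ∑ s ∈ A, F s m * bsum T (Finset.univ.erase m) F
      = ((∑ m' ∈ Finset.univ.filter (fun m' => m' ≠ m), 2 * (x m - x m')⁻¹)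
          - ∑ y ∈ T, G y m) * bsum T (Finset.univ.erase m) F := by
    intro m
    rw [← Finset.sum_mul, hsub m]
  rw [Finset.sum_congr rfl (fun m _ => step2 m)]
  -- expand everything into a triple sum
  have expand : ∀ m : Fin L,
      ((∑ m' ∈ Finset.univ.filter (fun m' => m' ≠ m), 2 * (x m - x m')⁻¹)
          - ∑ y ∈ T, G y m) * bsum T (Finset.univ.erase m) F
      = ∑ m' ∈ Finset.univ.filter (fun m' => m' ≠ m), ∑ y ∈ T,
          (2 * (x m - x m')⁻¹ - G y m) *
            (F y m' * bsum (T.erase y) ((Finset.univ.erase m).erase m') F) := by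
    intro m
    have e1 : ∀ m' ∈ Finset.univ.filter (fun m' => m' ≠ m),
        (2 * (x m - x m')⁻¹) * bsum T (Finset.univ.erase m) F
        = ∑ y ∈ T, (2 * (x m - x m')⁻¹) *
            (F y m' * bsum (T.erase y) ((Finset.univ.erase m).erase m') F) := by
      intro m' hm'
      have hm'2 : m' ∈ Finset.univ.erase m :=
        Finset.mem_erase.mpr ⟨(Finset.mem_filter.mp hm').2, Finset.mem_univ m'⟩
      rw [bsum_erase hm'2 F, Finset.mul_sum]
    have e2 : ∀ y ∈ T, G y m * bsum T (Finset.univ.erase m) F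
        = ∑ m' ∈ Finset.univ.filter (fun m' => m' ≠ m), G y m *
            (F y m' * bsum (T.erase y) ((Finset.univ.erase m).erase m') F) := by
      intro y hy
      have : bsum T (Finset.univ.erase m) F
          = ∑ m' ∈ (Finset.univ.erase m), F y m' *
              bsum (T.erase y) ((Finset.univ.erase m).erase m') F := by
        conv_lhs => rw [← Finset.insert_erase hy]
        rw [bsum_insert (Finset.notMem_erase y T) _ F]
      rw [this, Finset.mul_sum]
      rw [show (Finset.univ.erase m) = Finset.univ.filter (fun m' => m' ≠ m) from
        (Finset.filter_ne' Finset.univ m).symm]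
    have h1 : (∑ m' ∈ Finset.univ.filter (fun m' => m' ≠ m), 2 * (x m - x m')⁻¹)
        * bsum T (Finset.univ.erase m) F
        = ∑ m' ∈ Finset.univ.filter (fun m' => m' ≠ m), ∑ y ∈ T, (2 * (x m - x m')⁻¹ - G y m) *
            (F y m' * bsum (T.erase y) ((Finset.univ.erase m).erase m') F)
            + ∑ m' ∈ Finset.univ.filter (fun m' => m' ≠ m), ∑ y ∈ T, G y m *
            (F y m' * bsum (T.erase y) ((Finset.univ.erase m).erase m') F) := by
      rw [Finset.sum_mul, ← Finset.sum_add_distrib]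
      refine Finset.sum_congr rfl fun m' hm' => ?_
      rw [e1 m' hm', ← Finset.sum_add_distrib]
      exact Finset.sum_congr rfl fun y _ => by ring
    have h2 : (∑ y ∈ T, G y m) * bsum T (Finset.univ.erase m) F
        = ∑ m' ∈ Finset.univ.filter (fun m' => m' ≠ m), ∑ y ∈ T, G y m *
            (F y m' * bsum (T.erase y) ((Finset.univ.erase m).erase m') F) := by
      rw [Finset.sum_mul, Finset.sum_congr rfl e2, Finset.sum_comm]
    rw [sub_mul, h1, h2]
    ring
  rw [Finset.sum_congr rfl (fun m _ => expand m)]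
  -- pair off (m, m') with (m', m)
  have pair : ∀ (m m' : Fin L), m' ≠ m →
      (∑ y ∈ T, (2 * (x m - x m')⁻¹ - G y m) *
        (F y m' * bsum (T.erase y) ((Finset.univ.erase m).erase m') F))
      + (∑ y ∈ T, (2 * (x m' - x m)⁻¹ - G y m') *
        (F y m * bsum (T.erase y) ((Finset.univ.erase m').erase m) F)) = 0 := by
    intro m m' hne
    rw [← Finset.sum_add_distrib]
    refine Finset.sum_eq_zero fun y hy => ?_
    have hR : ((Finset.univ.erase m).erase m') = ((Finset.univ.erase m').erase m) :=
      Finset.erase_right_comm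
    rw [hR]
    have hyAT : y ∈ A ∪ T := Finset.mem_union_right _ hy
    have hXc : x m ≠ u (d y) := hxu m (d y) (hd3 y hyAT)
    have hYc : x m' ≠ u (d y) := hxu m' (d y) (hd3 y hyAT)
    have hXY : x m ≠ x m' := fun h => hne (hx h).symm
    by_cases hyT' : y ∈ T'
    · have hXw : x m ≠ v (e y) := hxv m (e y) (he3 y hyT')
      have hYw : x m' ≠ v (e y) := hxv m' (e y) (he3 y hyT')
      simp only [hF, hG, if_pos hyT']
      linear_combination (bsum (T.erase y) ((Finset.univ.erase m').erase m) F) *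
        pointwise2 hXY hXc hYc hXw hYw
    · simp only [hF, hG, if_neg hyT']
      linear_combination (bsum (T.erase y) ((Finset.univ.erase m').erase m) F) *
        pointwise1 hXY hXc hYc
  -- involution
  have conv1 : ∀ m : Fin L, (∑ m' ∈ Finset.univ.filter (fun m' => m' ≠ m), ∑ y ∈ T,
      (2 * (x m - x m')⁻¹ - G y m) *
        (F y m' * bsum (T.erase y) ((Finset.univ.erase m).erase m') F))
      = ∑ m' : Fin L, if m' ≠ m then (∑ y ∈ T,
      (2 * (x m - x m')⁻¹ - G y m) *
        (F y m' * bsum (T.erase y) ((Finset.univ.erase m).erase m') F)) else 0 :=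
    fun m => Finset.sum_filter _ _
  rw [Finset.sum_congr rfl (fun m _ => conv1 m)]
  have hprod : (∑ m : Fin L, ∑ m' : Fin L, (fun m m' => if m' ≠ m then (∑ y ∈ T,
      (2 * (x m - x m')⁻¹ - G y m) *
        (F y m' * bsum (T.erase y) ((Finset.univ.erase m).erase m') F)) else 0) m m')
      = ∑ z ∈ Finset.univ ×ˢ Finset.univ, (fun m m' => if m' ≠ m then (∑ y ∈ T,
      (2 * (x m - x m')⁻¹ - G y m) *
        (F y m' * bsum (T.erase y) ((Finset.univ.erase m).erase m') F)) else 0) z.1 z.2 := by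
    rw [← Finset.sum_product']
  rw [show (∑ m : Fin L, ∑ m' : Fin L, if m' ≠ m then (∑ y ∈ T,
      (2 * (x m - x m')⁻¹ - G y m) *
        (F y m' * bsum (T.erase y) ((Finset.univ.erase m).erase m') F)) else 0)
      = ∑ z ∈ Finset.univ ×ˢ Finset.univ, (if z.2 ≠ z.1 then (∑ y ∈ T,
      (2 * (x z.1 - x z.2)⁻¹ - G y z.1) *
        (F y z.2 * bsum (T.erase y) ((Finset.univ.erase z.1).erase z.2) F)) else 0) from hprod]
  refine Finset.sum_involution (fun z _ => z.swap) ?_ ?_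
    (fun z hz => by simp [Finset.mem_product]) (fun z hz => Prod.swap_swap z)
  · intro z _
    simp only [Prod.fst_swap, Prod.snd_swap]
    by_cases hz : z.2 ≠ z.1
    · rw [if_pos hz, if_pos (Ne.symm hz)]
      exact pair z.1 z.2 hz
    · rw [if_neg hz, if_neg (fun h => hz (Ne.symm h))]
      norm_num
  · intro z _ hf hswap
    apply hf
    have h21 : z.2 = z.1 := by
      have := congrArg Prod.fst hswap
      simpa using this
    rw [if_neg (by simp [h21])]


section Decomp

variable (N : ℕ) (lam : Fin N → ℕ)

/-- The collection of bijections at all levels other than `a`. -/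
def Rest (a : ℕ) (J : Fin (lseq N lam 0) → Fin N) : Type :=
  ∀ k : {k : Fin (N - 1) // (k : ℕ) ≠ a},
    {r : Fin (lseq N lam 0) // ((k : Fin (N - 1)) : ℕ) + 1 ≤ (J r : ℕ)} ≃
      Fin (lseq N lam (((k : Fin (N - 1)) : ℕ) + 1))

instance (a : ℕ) (J : Fin (lseq N lam 0) → Fin N) : Fintype (Rest N lam a J) := by
  unfold Rest; infer_instance

/-- `bcoord` relative to `J` determined by a `Rest` datum (levels `≠ a`). -/
def bcJ (a : ℕ) (J : Fin (lseq N lam 0) → Fin N) (δ : Rest N lam a J) (i : ℕ)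
    (r : Fin (lseq N lam 0)) : ℕ :=
  if h0 : i = 0 then (r : ℕ)
  else if h : i - 1 < N - 1 ∧ i ≤ (J r : ℕ) ∧ i - 1 ≠ a then
    (δ ⟨⟨i - 1, h.1⟩, h.2.2⟩ ⟨r, by show i - 1 + 1 ≤ (J r : ℕ); omega⟩ : ℕ)
  else 0

lemma mem_iff1 (a : ℕ) (ha : a + 1 < N) (J : Fin (lseq N lam 0) → Fin N)
    (s : Fin (lseq N lam 0)) (hs : (J s : ℕ) = a) (k : Fin (N - 1)) (hk : (k : ℕ) = a)
    (r : Fin (lseq N lam 0)) :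
    ((k : ℕ) + 1 ≤ ((Function.update J s (⟨a + 1, ha⟩ : Fin N)) r : ℕ)) ↔
      r ∈ insert s (Finset.univ.filter (fun r => a + 1 ≤ (J r : ℕ))) := by
  rw [Finset.mem_insert, Finset.mem_filter, hk]
  by_cases hrs : r = s
  · subst hrs
    rw [Function.update_self]
    simp
  · rw [Function.update_of_ne hrs]
    simp [hrs]

lemma mem_iff2 (a : ℕ) (ha : a + 1 < N) (J : Fin (lseq N lam 0) → Fin N)
    (s : Fin (lseq N lam 0)) (hs : (J s : ℕ) = a) (k : Fin (N - 1)) (hk : (k : ℕ) ≠ a)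
    (r : Fin (lseq N lam 0)) :
    ((k : ℕ) + 1 ≤ ((Function.update J s (⟨a + 1, ha⟩ : Fin N)) r : ℕ)) ↔
      ((k : ℕ) + 1 ≤ (J r : ℕ)) := by
  by_cases hrs : r = s
  · subst hrs
    rw [Function.update_self, hs]
    show (k : ℕ) + 1 ≤ a + 1 ↔ _
    omega
  · rw [Function.update_of_ne hrs]

/-- Reassembling a `BType` for the updated `J` from a `Rest` datum and a level-`a`
bijection. -/
def mkB (a : ℕ) (ha : a + 1 < N) (J : Fin (lseq N lam 0) → Fin N)
    (s : Fin (lseq N lam 0)) (hs : (J s : ℕ) = a) (δ : Rest N lam a J)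
    (γ : {y // y ∈ insert s (Finset.univ.filter (fun r => a + 1 ≤ (J r : ℕ)))} ≃
      Fin (lseq N lam (a + 1))) :
    BType N lam (Function.update J s ⟨a + 1, ha⟩) :=
  fun k =>
    if hk : (k : ℕ) = a then
      ((Equiv.subtypeEquivRight (mem_iff1 N lam a ha J s hs k hk)).trans γ).trans
        (finCongr (by rw [hk]))
    else
      (Equiv.subtypeEquivRight (mem_iff2 N lam a ha J s hs k hk)).trans (δ ⟨k, hk⟩)

def decompEquiv (a : ℕ) (ha : a + 1 < N) (J : Fin (lseq N lam 0) → Fin N)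
    (s : Fin (lseq N lam 0)) (hs : (J s : ℕ) = a) :
    ((Rest N lam a J) ×
      ({y // y ∈ insert s (Finset.univ.filter (fun r => a + 1 ≤ (J r : ℕ)))} ≃
        Fin (lseq N lam (a + 1)))) ≃ BType N lam (Function.update J s ⟨a + 1, ha⟩) where
  toFun z := mkB N lam a ha J s hs z.1 z.2
  invFun β :=
    (fun k => (Equiv.subtypeEquivRight
        (fun r => (mem_iff2 N lam a ha J s hs k.1 k.2 r).symm)).trans (β k.1),
      (Equiv.subtypeEquivRight
        (mem_iff1 N lam a ha J s hs ⟨a, by omega⟩ rfl)).symm.trans (β ⟨a, by omega⟩))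
  left_inv z := by
    obtain ⟨δ, γ⟩ := z
    refine Prod.ext ?_ ?_
    · funext k
      apply Equiv.ext
      intro r
      simp only [mkB, dif_neg k.2, Equiv.trans_apply, Equiv.subtypeEquivRight_apply]
    · apply Equiv.ext
      intro y
      apply Fin.ext
      simp only [mkB, dif_pos rfl, Equiv.trans_apply, finCongr_apply, Fin.coe_cast]
      rfl
  right_inv β := by
    funext k
    by_cases hk : (k : ℕ) = a
    · obtain ⟨kv, hkv⟩ := k
      simp only at hk
      subst hk
      apply Equiv.ext
      intro r
      apply Fin.ext
      simp only [mkB, dif_pos rfl, Equiv.trans_apply, finCongr_apply, Fin.coe_cast]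
      rfl
    · apply Equiv.ext
      intro r
      simp only [mkB, dif_neg hk, Equiv.trans_apply, Equiv.subtypeEquivRight_apply]

end Decomp
section Eval

variable (N : ℕ) (lam : Fin N → ℕ)

lemma lseq_zero_of_ge {i : ℕ} (hi : N ≤ i) : lseq N lam i = 0 := by
  unfold lseq
  rw [Finset.sum_eq_zero]
  intro b hb
  exact absurd (Finset.mem_filter.mp hb).2 (by omega)

lemma lseq_pos_lt {i : ℕ} (hi : 0 < lseq N lam i) : i < N := by
  by_contra h
  rw [lseq_zero_of_ge N lam (by omega)] at hi
  exact absurd hi (by omega)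

lemma lseq_succ_eq {i : ℕ} (hi : i < N) :
    lseq N lam i = lam ⟨i, hi⟩ + lseq N lam (i + 1) := by
  unfold lseq
  have hset : Finset.univ.filter (fun b : Fin N => i ≤ (b : ℕ))
      = insert ⟨i, hi⟩ (Finset.univ.filter (fun b : Fin N => i + 1 ≤ (b : ℕ))) := by
    ext b
    simp only [Finset.mem_filter, Finset.mem_insert, Finset.mem_univ, true_and]
    constructor
    · intro h
      by_cases hb : (b : ℕ) = i
      · exact Or.inl (Fin.ext hb)
      · exact Or.inr (by omega)
    · rintro (h | h)
      · subst h; rfl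
      · omega
  rw [hset, Finset.sum_insert (by simp)]

lemma tcoord_of_lt (t : (a : ℕ) → Fin (lseq N lam a) → ℂ) (a j : ℕ)
    (h : j < lseq N lam a) : tcoord N lam t a j = t a ⟨j, h⟩ := dif_pos h

variable (a : ℕ) (J : Fin (lseq N lam 0) → Fin N)

lemma bcJ_zero (δ : Rest N lam a J) (r : Fin (lseq N lam 0)) :
    bcJ N lam a J δ 0 r = (r : ℕ) := by simp [bcJ]

lemma bcJ_pos (δ : Rest N lam a J) {i : ℕ} (h0 : i ≠ 0) {r : Fin (lseq N lam 0)}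
    (hir : i ≤ (J r : ℕ)) (hia : i - 1 ≠ a) :
    bcJ N lam a J δ i r
      = (δ ⟨⟨i - 1, by have := (J r).isLt; omega⟩, hia⟩
          ⟨r, by show i - 1 + 1 ≤ (J r : ℕ); omega⟩ : ℕ) := by
  have h : i - 1 < N - 1 ∧ i ≤ (J r : ℕ) ∧ i - 1 ≠ a :=
    ⟨by have := (J r).isLt; omega, hir, hia⟩
  rw [bcJ, dif_neg h0, dif_pos h]

lemma bcJ_lt (δ : Rest N lam a J) {i : ℕ} {r : Fin (lseq N lam 0)}
    (hir : i ≤ (J r : ℕ)) (hia : i - 1 ≠ a ∨ i = 0) :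
    bcJ N lam a J δ i r < lseq N lam i := by
  by_cases h0 : i = 0
  · subst h0
    rw [bcJ_zero]
    exact r.isLt
  · have hia' : i - 1 ≠ a := hia.resolve_right h0
    rw [bcJ_pos N lam a J δ h0 hir hia']
    have hlt := (δ ⟨⟨i - 1, by have := (J r).isLt; omega⟩, hia'⟩
      ⟨r, by show i - 1 + 1 ≤ (J r : ℕ); omega⟩).isLt
    exact lt_of_lt_of_eq (show _ < lseq N lam (i - 1 + 1) from hlt)
      (by rw [show i - 1 + 1 = i from by omega])

/-- `bcoord` of the reassembled `BType` at levels `≠ a+1` agrees with `bcJ`. -/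
lemma bcoord_mkB_ne (ha : a + 1 < N) (s : Fin (lseq N lam 0)) (hs : (J s : ℕ) = a)
    (δ : Rest N lam a J)
    (γ : {y // y ∈ insert s (Finset.univ.filter (fun r => a + 1 ≤ (J r : ℕ)))} ≃
      Fin (lseq N lam (a + 1)))
    (i : ℕ) (r : Fin (lseq N lam 0)) (hir : i ≤ (J r : ℕ)) (hia : i ≠ a + 1) :
    bcoord N lam (Function.update J s ⟨a + 1, ha⟩) (mkB N lam a ha J s hs δ γ) i r
      = bcJ N lam a J δ i r := by
  by_cases h0 : i = 0
  · subst h0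
    simp [bcoord, bcJ]
  · have hlt : i - 1 < N - 1 := by have := (J r).isLt; omega
    have hcond : i - 1 < N - 1 ∧ i ≤ ((Function.update J s (⟨a + 1, ha⟩ : Fin N) r : Fin N) : ℕ) := by
      refine ⟨hlt, ?_⟩
      by_cases hrs : r = s
      · subst hrs
        rw [Function.update_self]
        show i ≤ a + 1
        omega
      · rw [Function.update_of_ne hrs]
        exact hir
    have hka : ((⟨i - 1, hcond.1⟩ : Fin (N - 1)) : ℕ) ≠ a := by
      show i - 1 ≠ a
      omega
    rw [bcoord, dif_neg h0, dif_pos hcond,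
      bcJ_pos N lam a J δ h0 hir (by show i - 1 ≠ a; omega)]
    simp only [mkB, dif_neg hka, Equiv.trans_apply, Equiv.subtypeEquivRight_apply]

/-- `bcoord` of the reassembled `BType` at level `a+1` is given by `γ`. -/
lemma bcoord_mkB_eq (ha : a + 1 < N) (s : Fin (lseq N lam 0)) (hs : (J s : ℕ) = a)
    (δ : Rest N lam a J)
    (γ : {y // y ∈ insert s (Finset.univ.filter (fun r => a + 1 ≤ (J r : ℕ)))} ≃
      Fin (lseq N lam (a + 1)))
    (r : Fin (lseq N lam 0))
    (hr : r ∈ insert s (Finset.univ.filter (fun r => a + 1 ≤ (J r : ℕ)))) :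
    bcoord N lam (Function.update J s ⟨a + 1, ha⟩) (mkB N lam a ha J s hs δ γ) (a + 1) r
      = ((γ ⟨r, hr⟩ : Fin (lseq N lam (a + 1))) : ℕ) := by
  have h0 : a + 1 ≠ 0 := by omega
  have hcond : a + 1 - 1 < N - 1 ∧ a + 1 ≤ ((Function.update J s (⟨a + 1, ha⟩ : Fin N) r : Fin N) : ℕ) := by
    refine ⟨by omega, ?_⟩
    rcases Finset.mem_insert.mp hr with hrs | hrT
    · subst hrs
      rw [Function.update_self]
    · have hrs : r ≠ s := by
        intro hcon
        rw [hcon] at hrT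
        have := (Finset.mem_filter.mp hrT).2
        omega
      rw [Function.update_of_ne hrs]
      exact (Finset.mem_filter.mp hrT).2
  have hka : ((⟨a + 1 - 1, hcond.1⟩ : Fin (N - 1)) : ℕ) = a := rfl
  rw [bcoord, dif_neg h0, dif_pos hcond]
  simp only [mkB, dif_pos hka, Equiv.trans_apply, Equiv.subtypeEquivRight_apply,
    finCongr_apply, Fin.coe_cast]

end Eval
section DE

variable (N : ℕ) (lam : Fin N → ℕ) (a : ℕ) (J : Fin (lseq N lam 0) → Fin N)

lemma d_lt (δ : Rest N lam a J) {r : Fin (lseq N lam 0)} (hr : a ≤ (J r : ℕ)) :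
    bcJ N lam a J δ a r < lseq N lam a :=
  bcJ_lt N lam a J δ hr (by omega)

lemma d_inj (δ : Rest N lam a J) {r₁ r₂ : Fin (lseq N lam 0)}
    (h₁ : a ≤ (J r₁ : ℕ)) (h₂ : a ≤ (J r₂ : ℕ))
    (h : bcJ N lam a J δ a r₁ = bcJ N lam a J δ a r₂) : r₁ = r₂ := by
  by_cases h0 : a = 0
  · subst h0
    rw [bcJ_zero, bcJ_zero] at h
    exact Fin.ext h
  · rw [bcJ_pos N lam a J δ h0 h₁ (by omega), bcJ_pos N lam a J δ h0 h₂ (by omega)] at h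
    have h2 := (δ _).injective (Fin.ext h)
    exact Fin.ext (congrArg (fun z => ((Subtype.val z : Fin (lseq N lam 0)) : ℕ)) h2)

lemma d_surj (δ : Rest N lam a J) {k : ℕ} (hk : k < lseq N lam a) :
    ∃ r : Fin (lseq N lam 0), a ≤ (J r : ℕ) ∧ bcJ N lam a J δ a r = k := by
  by_cases h0 : a = 0
  · subst h0
    exact ⟨⟨k, hk⟩, Nat.zero_le _, bcJ_zero N lam 0 J δ _⟩
  · have hK : a - 1 < N - 1 := by
      have : 0 < lseq N lam a := by omega
      have := lseq_pos_lt N lam this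
      omega
    have hk' : k < lseq N lam (a - 1 + 1) := by
      rw [show a - 1 + 1 = a from by omega]; exact hk
    set K : {k : Fin (N - 1) // (k : ℕ) ≠ a} := ⟨⟨a - 1, hK⟩, by show a - 1 ≠ a; omega⟩
    set rr := (δ K).symm ⟨k, hk'⟩ with hrr
    have hmem : a - 1 + 1 ≤ (J (rr : Fin (lseq N lam 0)) : ℕ) := rr.2
    refine ⟨rr, by omega, ?_⟩
    rw [bcJ_pos N lam a J δ h0 (by omega) (by omega)]
    show ((δ K ⟨(rr : Fin (lseq N lam 0)), _⟩ : Fin _) : ℕ) = k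
    have heta : (⟨(rr : Fin (lseq N lam 0)), hmem⟩ : {r : Fin (lseq N lam 0) // a - 1 + 1 ≤ (J r : ℕ)}) = rr :=
      Subtype.ext rfl
    rw [heta, hrr, Equiv.apply_symm_apply]

lemma e_lt (δ : Rest N lam a J) {r : Fin (lseq N lam 0)} (hr : a + 2 ≤ (J r : ℕ)) :
    bcJ N lam a J δ (a + 2) r < lseq N lam (a + 2) :=
  bcJ_lt N lam a J δ hr (by omega)

lemma e_inj (δ : Rest N lam a J) {r₁ r₂ : Fin (lseq N lam 0)}
    (h₁ : a + 2 ≤ (J r₁ : ℕ)) (h₂ : a + 2 ≤ (J r₂ : ℕ))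
    (h : bcJ N lam a J δ (a + 2) r₁ = bcJ N lam a J δ (a + 2) r₂) : r₁ = r₂ := by
  rw [bcJ_pos N lam a J δ (by omega) h₁ (by omega),
    bcJ_pos N lam a J δ (by omega) h₂ (by omega)] at h
  have h2 := (δ _).injective (Fin.ext h)
  exact Fin.ext (congrArg (fun z => ((Subtype.val z : Fin (lseq N lam 0)) : ℕ)) h2)

lemma e_surj (δ : Rest N lam a J) {k : ℕ} (hk : k < lseq N lam (a + 2)) :
    ∃ r : Fin (lseq N lam 0), a + 2 ≤ (J r : ℕ) ∧ bcJ N lam a J δ (a + 2) r = k := by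
  have hK : a + 2 - 1 < N - 1 := by
    have : 0 < lseq N lam (a + 2) := by omega
    have := lseq_pos_lt N lam this
    omega
  have hk' : k < lseq N lam (a + 2 - 1 + 1) := hk
  set K : {k : Fin (N - 1) // (k : ℕ) ≠ a} := ⟨⟨a + 2 - 1, hK⟩, by show a + 2 - 1 ≠ a; omega⟩
  set rr := (δ K).symm ⟨k, hk'⟩ with hrr
  have hmem : a + 2 - 1 + 1 ≤ (J (rr : Fin (lseq N lam 0)) : ℕ) := rr.2
  refine ⟨rr, by omega, ?_⟩
  rw [bcJ_pos N lam a J δ (by omega) (by omega) (by omega)]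
  show ((δ K ⟨(rr : Fin (lseq N lam 0)), _⟩ : Fin _) : ℕ) = k
  have heta : (⟨(rr : Fin (lseq N lam 0)), hmem⟩ :
      {r : Fin (lseq N lam 0) // a + 2 - 1 + 1 ≤ (J r : ℕ)}) = rr := Subtype.ext rfl
  rw [heta, hrr, Equiv.apply_symm_apply]

end DE
section ProdEq

variable (N : ℕ) (lam : Fin N → ℕ) (t : (a : ℕ) → Fin (lseq N lam a) → ℂ)

lemma specFactor2 (a : ℕ) (ha : a + 1 < N) (J : Fin (lseq N lam 0) → Fin N)
    (s : Fin (lseq N lam 0)) (hsa : (J s : ℕ) = a) (δ : Rest N lam a J)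
    (γ : {y // y ∈ insert s (Finset.univ.filter (fun r => a + 1 ≤ (J r : ℕ)))} ≃
      Fin (lseq N lam (a + 1)))
    (y : Fin (lseq N lam 0))
    (hy : y ∈ insert s (Finset.univ.filter (fun r => a + 1 ≤ (J r : ℕ))))
    (hy2 : a + 2 ≤ (J y : ℕ)) :
    (tcoord N lam t (a + 1)
        (bcoord N lam (Function.update J s ⟨a + 1, ha⟩) (mkB N lam a ha J s hsa δ γ) (a + 1) y) -
      tcoord N lam t a
        (bcoord N lam (Function.update J s ⟨a + 1, ha⟩) (mkB N lam a ha J s hsa δ γ) a y))⁻¹ *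
    (tcoord N lam t (a + 2)
        (bcoord N lam (Function.update J s ⟨a + 1, ha⟩) (mkB N lam a ha J s hsa δ γ) (a + 2) y) -
      tcoord N lam t (a + 1)
        (bcoord N lam (Function.update J s ⟨a + 1, ha⟩) (mkB N lam a ha J s hsa δ γ) (a + 1) y))⁻¹
    = (t (a + 1) (γ ⟨y, hy⟩) - tcoord N lam t a (bcJ N lam a J δ a y))⁻¹ *
      (tcoord N lam t (a + 2) (bcJ N lam a J δ (a + 2) y) - t (a + 1) (γ ⟨y, hy⟩))⁻¹ := by
  rw [bcoord_mkB_eq N lam a J ha s hsa δ γ y hy,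
    bcoord_mkB_ne N lam a J ha s hsa δ γ a y (by omega) (by omega),
    bcoord_mkB_ne N lam a J ha s hsa δ γ (a + 2) y hy2 (by omega),
    tcoord_of_lt N lam t (a + 1) _ (γ ⟨y, hy⟩).isLt, Fin.eta]

lemma specFactor1 (a : ℕ) (ha : a + 1 < N) (J : Fin (lseq N lam 0) → Fin N)
    (s : Fin (lseq N lam 0)) (hsa : (J s : ℕ) = a) (δ : Rest N lam a J)
    (γ : {y // y ∈ insert s (Finset.univ.filter (fun r => a + 1 ≤ (J r : ℕ)))} ≃
      Fin (lseq N lam (a + 1)))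
    (y : Fin (lseq N lam 0))
    (hy : y ∈ insert s (Finset.univ.filter (fun r => a + 1 ≤ (J r : ℕ))))
    (hya : a ≤ (J y : ℕ)) :
    (tcoord N lam t (a + 1)
        (bcoord N lam (Function.update J s ⟨a + 1, ha⟩) (mkB N lam a ha J s hsa δ γ) (a + 1) y) -
      tcoord N lam t a
        (bcoord N lam (Function.update J s ⟨a + 1, ha⟩) (mkB N lam a ha J s hsa δ γ) a y))⁻¹
    = (t (a + 1) (γ ⟨y, hy⟩) - tcoord N lam t a (bcJ N lam a J δ a y))⁻¹ := by
  rw [bcoord_mkB_eq N lam a J ha s hsa δ γ y hy,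
    bcoord_mkB_ne N lam a J ha s hsa δ γ a y hya (by omega),
    tcoord_of_lt N lam t (a + 1) _ (γ ⟨y, hy⟩).isLt, Fin.eta]

lemma prodEq (a : ℕ) (ha : a + 1 < N) (J : Fin (lseq N lam 0) → Fin N)
    (s : Fin (lseq N lam 0)) (hsa : (J s : ℕ) = a) (δ : Rest N lam a J)
    (γ : {y // y ∈ insert s (Finset.univ.filter (fun r => a + 1 ≤ (J r : ℕ)))} ≃
      Fin (lseq N lam (a + 1))) :
    (∏ r : Fin (lseq N lam 0),
      ∏ i ∈ Finset.Icc 1 (((Function.update J s (⟨a + 1, ha⟩ : Fin N)) r : Fin N) : ℕ),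
        (tcoord N lam t i
            (bcoord N lam (Function.update J s ⟨a + 1, ha⟩) (mkB N lam a ha J s hsa δ γ) i r) -
          tcoord N lam t (i - 1)
            (bcoord N lam (Function.update J s ⟨a + 1, ha⟩) (mkB N lam a ha J s hsa δ γ) (i - 1) r))⁻¹)
    = (∏ r : Fin (lseq N lam 0),
        ∏ i ∈ (Finset.Icc 1 ((J r : ℕ))).filter (fun i => ¬(i = a + 1 ∨ i = a + 2)),
          (tcoord N lam t i (bcJ N lam a J δ i r) -
            tcoord N lam t (i - 1) (bcJ N lam a J δ (i - 1) r))⁻¹)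
      * ∏ y : {y // y ∈ insert s (Finset.univ.filter (fun r => a + 1 ≤ (J r : ℕ)))},
          ((t (a + 1) (γ y) - tcoord N lam t a (bcJ N lam a J δ a ↑y))⁻¹ *
            if (↑y : Fin (lseq N lam 0)) ∈ Finset.univ.filter
                (fun r : Fin (lseq N lam 0) => a + 2 ≤ (J r : ℕ)) then
              (tcoord N lam t (a + 2) (bcJ N lam a J δ (a + 2) ↑y) - t (a + 1) (γ y))⁻¹
            else 1) := by
  classical
  have hJ's : (((Function.update J s (⟨a + 1, ha⟩ : Fin N)) s : Fin N) : ℕ) = a + 1 := by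
    rw [Function.update_self]
  have hJ'r : ∀ r, r ≠ s →
      (((Function.update J s (⟨a + 1, ha⟩ : Fin N)) r : Fin N) : ℕ) = (J r : ℕ) := by
    intro r hr; rw [Function.update_of_ne hr]
  have split : ∀ r : Fin (lseq N lam 0),
      (∏ i ∈ Finset.Icc 1 (((Function.update J s (⟨a + 1, ha⟩ : Fin N)) r : Fin N) : ℕ),
        (tcoord N lam t i
            (bcoord N lam (Function.update J s ⟨a + 1, ha⟩) (mkB N lam a ha J s hsa δ γ) i r) -
          tcoord N lam t (i - 1)
            (bcoord N lam (Function.update J s ⟨a + 1, ha⟩) (mkB N lam a ha J s hsa δ γ) (i - 1) r))⁻¹)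
      = (∏ i ∈ (Finset.Icc 1 (((Function.update J s (⟨a + 1, ha⟩ : Fin N)) r : Fin N) : ℕ)).filter
            (fun i => i = a + 1 ∨ i = a + 2),
          (tcoord N lam t i
              (bcoord N lam (Function.update J s ⟨a + 1, ha⟩) (mkB N lam a ha J s hsa δ γ) i r) -
            tcoord N lam t (i - 1)
              (bcoord N lam (Function.update J s ⟨a + 1, ha⟩) (mkB N lam a ha J s hsa δ γ) (i - 1) r))⁻¹)
        * (∏ i ∈ (Finset.Icc 1 (((Function.update J s (⟨a + 1, ha⟩ : Fin N)) r : Fin N) : ℕ)).filter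
            (fun i => ¬(i = a + 1 ∨ i = a + 2)),
          (tcoord N lam t i
              (bcoord N lam (Function.update J s ⟨a + 1, ha⟩) (mkB N lam a ha J s hsa δ γ) i r) -
            tcoord N lam t (i - 1)
              (bcoord N lam (Function.update J s ⟨a + 1, ha⟩) (mkB N lam a ha J s hsa δ γ) (i - 1) r))⁻¹) :=
    fun r => (Finset.prod_filter_mul_prod_filter_not _ _ _).symm
  rw [Finset.prod_congr rfl (fun r _ => split r), Finset.prod_mul_distrib, mul_comm]
  congr 1
  -- the "rest" part
  · apply Finset.prod_congr rfl
    intro r _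
    have hsets : (Finset.Icc 1 (((Function.update J s (⟨a + 1, ha⟩ : Fin N)) r : Fin N) : ℕ)).filter
          (fun i => ¬(i = a + 1 ∨ i = a + 2))
        = (Finset.Icc 1 ((J r : ℕ))).filter (fun i => ¬(i = a + 1 ∨ i = a + 2)) := by
      by_cases hrs : r = s
      · subst hrs
        rw [hJ's]
        ext i
        simp only [Finset.mem_filter, Finset.mem_Icc, hsa]
        omega
      · rw [hJ'r r hrs]
    rw [hsets]
    apply Finset.prod_congr rfl
    intro i hi
    rw [Finset.mem_filter, Finset.mem_Icc] at hi
    have h1 : i ≤ (J r : ℕ) := hi.1.2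
    have h2 : i ≠ a + 1 := fun h => hi.2 (Or.inl h)
    have h3 : i - 1 ≠ a + 1 := by
      intro h
      exact hi.2 (Or.inr (by omega))
    rw [bcoord_mkB_ne N lam a J ha s hsa δ γ i r h1 h2,
      bcoord_mkB_ne N lam a J ha s hsa δ γ (i - 1) r (by omega) h3]
  -- the "special" part
  · have hspec1 : ∀ r : Fin (lseq N lam 0),
        r ∉ insert s (Finset.univ.filter (fun r => a + 1 ≤ (J r : ℕ))) →
        (∏ i ∈ (Finset.Icc 1 (((Function.update J s (⟨a + 1, ha⟩ : Fin N)) r : Fin N) : ℕ)).filter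
            (fun i => i = a + 1 ∨ i = a + 2),
          (tcoord N lam t i
              (bcoord N lam (Function.update J s ⟨a + 1, ha⟩) (mkB N lam a ha J s hsa δ γ) i r) -
            tcoord N lam t (i - 1)
              (bcoord N lam (Function.update J s ⟨a + 1, ha⟩) (mkB N lam a ha J s hsa δ γ) (i - 1) r))⁻¹) = 1 := by
      intro r hr
      have hrs : r ≠ s := fun h =>
        hr (h ▸ Finset.mem_insert_self s (Finset.univ.filter (fun r => a + 1 ≤ (J r : ℕ))))
      have hrT : ¬(a + 1 ≤ (J r : ℕ)) := by
        intro h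
        exact hr (Finset.mem_insert_of_mem (Finset.mem_filter.mpr ⟨Finset.mem_univ r, h⟩))
      have hempty : (Finset.Icc 1 (((Function.update J s (⟨a + 1, ha⟩ : Fin N)) r : Fin N) : ℕ)).filter
          (fun i => i = a + 1 ∨ i = a + 2) = ∅ := by
        rw [hJ'r r hrs]
        ext i
        simp only [Finset.mem_filter, Finset.mem_Icc, Finset.notMem_empty, iff_false]
        omega
      rw [hempty, Finset.prod_empty]
    rw [← Finset.prod_subset
        (Finset.subset_univ (insert s (Finset.univ.filter (fun r => a + 1 ≤ (J r : ℕ)))))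
        (fun r _ hr => hspec1 r hr),
      ← Finset.prod_attach (insert s (Finset.univ.filter (fun r => a + 1 ≤ (J r : ℕ)))) (fun r =>
        ∏ i ∈ (Finset.Icc 1 (((Function.update J s (⟨a + 1, ha⟩ : Fin N)) r : Fin N) : ℕ)).filter
            (fun i => i = a + 1 ∨ i = a + 2),
          (tcoord N lam t i
              (bcoord N lam (Function.update J s ⟨a + 1, ha⟩) (mkB N lam a ha J s hsa δ γ) i r) -
            tcoord N lam t (i - 1)
              (bcoord N lam (Function.update J s ⟨a + 1, ha⟩) (mkB N lam a ha J s hsa δ γ) (i - 1) r))⁻¹),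
      ← Finset.univ_eq_attach]
    apply Finset.prod_congr rfl
    intro y _
    have hy := y.2
    by_cases hy2 : a + 2 ≤ ((J (↑y : Fin (lseq N lam 0)) : Fin N) : ℕ)
    · have hys : (↑y : Fin (lseq N lam 0)) ≠ s := by
        intro h
        rw [h, hsa] at hy2
        omega
      have hsets : (Finset.Icc 1 (((Function.update J s (⟨a + 1, ha⟩ : Fin N))
            (↑y : Fin (lseq N lam 0)) : Fin N) : ℕ)).filter
          (fun i => i = a + 1 ∨ i = a + 2) = {a + 1, a + 2} := by
        rw [hJ'r _ hys]
        ext i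
        simp only [Finset.mem_filter, Finset.mem_Icc, Finset.mem_insert, Finset.mem_singleton]
        omega
      rw [hsets, Finset.prod_pair (by omega),
        if_pos (Finset.mem_filter.mpr ⟨Finset.mem_univ (↑y : Fin (lseq N lam 0)), hy2⟩)]
      exact specFactor2 N lam t a ha J s hsa δ γ ↑y hy hy2
    · have hya : a ≤ ((J (↑y : Fin (lseq N lam 0)) : Fin N) : ℕ) := by
        rcases Finset.mem_insert.mp hy with h | h
        · rw [h, hsa]
        · have hmem := (Finset.mem_filter.mp h).2
          omega
      have hval : (((Function.update J s (⟨a + 1, ha⟩ : Fin N))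
          (↑y : Fin (lseq N lam 0)) : Fin N) : ℕ) = a + 1 := by
        rcases Finset.mem_insert.mp hy with h | h
        · rw [h]; exact hJ's
        · have hmem := (Finset.mem_filter.mp h).2
          have hys : (↑y : Fin (lseq N lam 0)) ≠ s := by
            intro hcon
            rw [hcon, hsa] at hmem
            omega
          rw [hJ'r _ hys]
          omega
      have hsets : (Finset.Icc 1 (((Function.update J s (⟨a + 1, ha⟩ : Fin N))
            (↑y : Fin (lseq N lam 0)) : Fin N) : ℕ)).filter
          (fun i => i = a + 1 ∨ i = a + 2) = {a + 1} := by
        rw [hval]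
        ext i
        simp only [Finset.mem_filter, Finset.mem_Icc, Finset.mem_singleton]
        omega
      rw [hsets, Finset.prod_singleton,
        if_neg (fun hcon : (↑y : Fin (lseq N lam 0)) ∈ Finset.univ.filter
            (fun r : Fin (lseq N lam 0) => a + 2 ≤ (J r : ℕ)) =>
          hy2 (Finset.mem_filter.mp hcon).2), mul_one]
      exact specFactor1 N lam t a ha J s hsa δ γ ↑y hy hya

end ProdEq
lemma mainstep (N : ℕ) (lam : Fin N → ℕ) (t : (a : ℕ) → Fin (lseq N lam a) → ℂ)
    (hsimple : ∀ a < N, Function.Injective (t a))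
    (hdisj : ∀ a : ℕ, 1 ≤ a → a < N →
      ∀ (j : Fin (lseq N lam a)) (j' : Fin (lseq N lam (a - 1))), t a j ≠ t (a - 1) j')
    (hBAE : BAE N lam t) (a : ℕ) (ha : a + 1 < N) (haN : a < N) :
    glAct N (lseq N lam 0) ⟨a, haN⟩ ⟨a + 1, ha⟩ (weightFun N lam t) = 0 := by
  classical
  funext J
  show (∑ s : Fin (lseq N lam 0), if J s = (⟨a, haN⟩ : Fin N) then
      weightFun N lam t (Function.update J s ⟨a + 1, ha⟩) else 0) = 0
  have hrw1 : (∑ s : Fin (lseq N lam 0), if J s = (⟨a, haN⟩ : Fin N) then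
      weightFun N lam t (Function.update J s ⟨a + 1, ha⟩) else 0)
      = ∑ s ∈ Finset.univ.filter (fun s => (J s : ℕ) = a),
          weightFun N lam t (Function.update J s ⟨a + 1, ha⟩) := by
    rw [Finset.sum_filter]
    apply Finset.sum_congr rfl
    intro s _
    apply if_congr _ rfl rfl
    exact ⟨fun h => by rw [h], fun h => Fin.ext h⟩
  rw [hrw1]
  have cntU : ∀ s ∈ Finset.univ.filter (fun s => (J s : ℕ) = a), ∀ i : ℕ,
      (Finset.univ.filter fun r =>
        i ≤ ((Function.update J s (⟨a + 1, ha⟩ : Fin N) r : Fin N) : ℕ)).card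
      = (Finset.univ.filter fun r => i ≤ (J r : ℕ)).card + (if i = a + 1 then 1 else 0) := by
    intro s hs i
    have hsa : (J s : ℕ) = a := (Finset.mem_filter.mp hs).2
    by_cases hi : i = a + 1
    · subst hi
      rw [if_pos rfl]
      have hset : (Finset.univ.filter fun r =>
          a + 1 ≤ ((Function.update J s (⟨a + 1, ha⟩ : Fin N) r : Fin N) : ℕ))
          = insert s (Finset.univ.filter fun r => a + 1 ≤ (J r : ℕ)) := by
        ext r
        simp only [Finset.mem_filter, Finset.mem_insert, Finset.mem_univ, true_and]
        by_cases hrs : r = s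
        · subst hrs
          rw [Function.update_self]
          simp
        · rw [Function.update_of_ne hrs]
          simp [hrs]
      rw [hset, Finset.card_insert_of_notMem (by
        simp only [Finset.mem_filter, Finset.mem_univ, true_and, not_le, hsa]
        omega)]
    · rw [if_neg hi, add_zero]
      congr 1
      apply Finset.filter_congr
      intro r _
      by_cases hrs : r = s
      · subst hrs
        rw [Function.update_self, hsa]
        show i ≤ a + 1 ↔ i ≤ a
        omega
      · rw [Function.update_of_ne hrs]
  have admIff : ∀ s ∈ Finset.univ.filter (fun s => (J s : ℕ) = a),
      (IsAdmissible N lam (Function.update J s ⟨a + 1, ha⟩)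
      ↔ ∀ i ∈ Finset.Ico 1 N, (Finset.univ.filter fun r => i ≤ (J r : ℕ)).card
          + (if i = a + 1 then 1 else 0) = lseq N lam i) := by
    intro s hs
    unfold IsAdmissible
    constructor
    · intro h i hi
      rw [← cntU s hs i]
      exact h i hi
    · intro h i hi
      rw [cntU s hs i]
      exact h i hi
  by_cases hP : ∀ i ∈ Finset.Ico 1 N, (Finset.univ.filter fun r => i ≤ (J r : ℕ)).card
      + (if i = a + 1 then 1 else 0) = lseq N lam i
  swap
  · apply Finset.sum_eq_zero
    intro s hs
    have hnadm : ¬ IsAdmissible N lam (Function.update J s ⟨a + 1, ha⟩) :=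
      fun h => hP ((admIff s hs).mp h)
    simp only [weightFun, if_neg hnadm]
  · -- admissible case
    have memAT : ∀ r : Fin (lseq N lam 0),
        r ∈ (Finset.univ.filter (fun s => (J s : ℕ) = a))
            ∪ (Finset.univ.filter (fun r => a + 1 ≤ (J r : ℕ))) ↔ a ≤ (J r : ℕ) := by
      intro r
      simp only [Finset.mem_union, Finset.mem_filter, Finset.mem_univ, true_and]
      omega
    have memT' : ∀ r : Fin (lseq N lam 0),
        r ∈ Finset.univ.filter (fun r => a + 2 ≤ (J r : ℕ)) ↔ a + 2 ≤ (J r : ℕ) := by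
      intro r
      simp only [Finset.mem_filter, Finset.mem_univ, true_and]
    have hxu : ∀ (m : Fin (lseq N lam (a + 1))) (k : ℕ), k < lseq N lam a →
        t (a + 1) m ≠ tcoord N lam t a k := by
      intro m k hk
      rw [tcoord_of_lt N lam t a k hk]
      exact hdisj (a + 1) (by omega) ha m ⟨k, hk⟩
    have hxv : ∀ (m : Fin (lseq N lam (a + 1))) (k : ℕ), k < lseq N lam (a + 2) →
        t (a + 1) m ≠ tcoord N lam t (a + 2) k := by
      intro m k hk
      rw [tcoord_of_lt N lam t (a + 2) k hk]
      have haN2 : a + 2 < N := lseq_pos_lt N lam (by omega)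
      exact (hdisj (a + 2) (by omega) haN2 ⟨k, hk⟩ m).symm
    have hb : ∀ m : Fin (lseq N lam (a + 1)),
        (∑ k ∈ Finset.range (lseq N lam a), (t (a + 1) m - tcoord N lam t a k)⁻¹)
        - (∑ m' ∈ Finset.univ.filter (fun m' => m' ≠ m), 2 * (t (a + 1) m - t (a + 1) m')⁻¹)
        + (∑ k ∈ Finset.range (lseq N lam (a + 2)), (t (a + 1) m - tcoord N lam t (a + 2) k)⁻¹)
        = 0 := by
      intro m
      have hb1 : (∑ j' : Fin (lseq N lam a), 1 / (t (a + 1) m - t a j'))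
          - (∑ j' ∈ Finset.univ.filter (fun j' => j' ≠ m), 2 / (t (a + 1) m - t (a + 1) j'))
          + (∑ j' : Fin (lseq N lam (a + 2)), 1 / (t (a + 1) m - t (a + 2) j')) = 0 :=
        hBAE (a + 1) (by omega) ha m
      have e1 : (∑ k ∈ Finset.range (lseq N lam a), (t (a + 1) m - tcoord N lam t a k)⁻¹)
          = ∑ j' : Fin (lseq N lam a), 1 / (t (a + 1) m - t a j') := by
        rw [Finset.sum_range]
        apply Finset.sum_congr rfl
        intro k _
        rw [tcoord_of_lt N lam t a _ k.isLt, Fin.eta, one_div]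
      have e3 : (∑ k ∈ Finset.range (lseq N lam (a + 2)),
            (t (a + 1) m - tcoord N lam t (a + 2) k)⁻¹)
          = ∑ j' : Fin (lseq N lam (a + 2)), 1 / (t (a + 1) m - t (a + 2) j') := by
        rw [Finset.sum_range]
        apply Finset.sum_congr rfl
        intro k _
        rw [tcoord_of_lt N lam t (a + 2) _ k.isLt, Fin.eta, one_div]
      have e2 : (∑ m' ∈ Finset.univ.filter (fun m' => m' ≠ m),
            2 * (t (a + 1) m - t (a + 1) m')⁻¹)
          = ∑ j' ∈ Finset.univ.filter (fun j' => j' ≠ m), 2 / (t (a + 1) m - t (a + 1) j') := by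
        apply Finset.sum_congr rfl
        intro j' _
        rw [div_eq_mul_inv]
      rw [e1, e2, e3]
      exact hb1
    have hws : ∀ s ∈ Finset.univ.filter (fun s : Fin (lseq N lam 0) => (J s : ℕ) = a),
        weightFun N lam t (Function.update J s ⟨a + 1, ha⟩)
        = ∑ δ : Rest N lam a J,
            (∏ r : Fin (lseq N lam 0),
              ∏ i ∈ (Finset.Icc 1 ((J r : ℕ))).filter (fun i => ¬(i = a + 1 ∨ i = a + 2)),
                (tcoord N lam t i (bcJ N lam a J δ i r) -
                  tcoord N lam t (i - 1) (bcJ N lam a J δ (i - 1) r))⁻¹)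
            * ∑ γ : {y // y ∈ insert s (Finset.univ.filter (fun r => a + 1 ≤ (J r : ℕ)))} ≃
                  Fin (lseq N lam (a + 1)),
                ∏ y : {y // y ∈ insert s (Finset.univ.filter (fun r => a + 1 ≤ (J r : ℕ)))},
                  ((t (a + 1) (γ y) - tcoord N lam t a (bcJ N lam a J δ a ↑y))⁻¹ *
                    if (↑y : Fin (lseq N lam 0)) ∈ Finset.univ.filter
                        (fun r : Fin (lseq N lam 0) => a + 2 ≤ (J r : ℕ)) then
                      (tcoord N lam t (a + 2) (bcJ N lam a J δ (a + 2) ↑y) - t (a + 1) (γ y))⁻¹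
                    else 1) := by
      intro s hs
      have hsa : (J s : ℕ) = a := (Finset.mem_filter.mp hs).2
      calc weightFun N lam t (Function.update J s ⟨a + 1, ha⟩)
          = ∑ β : BType N lam (Function.update J s ⟨a + 1, ha⟩),
              ∏ r : Fin (lseq N lam 0),
                ∏ i ∈ Finset.Icc 1 (((Function.update J s (⟨a + 1, ha⟩ : Fin N)) r : Fin N) : ℕ),
                  (tcoord N lam t i
                      (bcoord N lam (Function.update J s ⟨a + 1, ha⟩) β i r) -
                    tcoord N lam t (i - 1)
                      (bcoord N lam (Function.update J s ⟨a + 1, ha⟩) β (i - 1) r))⁻¹ := by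
            simp only [weightFun]
            rw [if_pos ((admIff s hs).mpr hP)]
        _ = ∑ z : (Rest N lam a J) ×
              ({y // y ∈ insert s (Finset.univ.filter (fun r => a + 1 ≤ (J r : ℕ)))} ≃
                Fin (lseq N lam (a + 1))),
              ∏ r : Fin (lseq N lam 0),
                ∏ i ∈ Finset.Icc 1 (((Function.update J s (⟨a + 1, ha⟩ : Fin N)) r : Fin N) : ℕ),
                  (tcoord N lam t i
                      (bcoord N lam (Function.update J s ⟨a + 1, ha⟩)
                        (mkB N lam a ha J s hsa z.1 z.2) i r) -
                    tcoord N lam t (i - 1)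
                      (bcoord N lam (Function.update J s ⟨a + 1, ha⟩)
                        (mkB N lam a ha J s hsa z.1 z.2) (i - 1) r))⁻¹ :=
            (Fintype.sum_equiv (decompEquiv N lam a ha J s hsa) _ _ (fun z => rfl)).symm
        _ = ∑ δ : Rest N lam a J,
            ∑ γ : {y // y ∈ insert s (Finset.univ.filter (fun r => a + 1 ≤ (J r : ℕ)))} ≃
                Fin (lseq N lam (a + 1)),
              ∏ r : Fin (lseq N lam 0),
                ∏ i ∈ Finset.Icc 1 (((Function.update J s (⟨a + 1, ha⟩ : Fin N)) r : Fin N) : ℕ),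
                  (tcoord N lam t i
                      (bcoord N lam (Function.update J s ⟨a + 1, ha⟩)
                        (mkB N lam a ha J s hsa δ γ) i r) -
                    tcoord N lam t (i - 1)
                      (bcoord N lam (Function.update J s ⟨a + 1, ha⟩)
                        (mkB N lam a ha J s hsa δ γ) (i - 1) r))⁻¹ :=
            Fintype.sum_prod_type _
        _ = ∑ δ : Rest N lam a J,
            ∑ γ : {y // y ∈ insert s (Finset.univ.filter (fun r => a + 1 ≤ (J r : ℕ)))} ≃
                Fin (lseq N lam (a + 1)),
              (∏ r : Fin (lseq N lam 0),
                ∏ i ∈ (Finset.Icc 1 ((J r : ℕ))).filter (fun i => ¬(i = a + 1 ∨ i = a + 2)),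
                  (tcoord N lam t i (bcJ N lam a J δ i r) -
                    tcoord N lam t (i - 1) (bcJ N lam a J δ (i - 1) r))⁻¹)
              * ∏ y : {y // y ∈ insert s (Finset.univ.filter (fun r => a + 1 ≤ (J r : ℕ)))},
                  ((t (a + 1) (γ y) - tcoord N lam t a (bcJ N lam a J δ a ↑y))⁻¹ *
                    if (↑y : Fin (lseq N lam 0)) ∈ Finset.univ.filter
                        (fun r : Fin (lseq N lam 0) => a + 2 ≤ (J r : ℕ)) then
                      (tcoord N lam t (a + 2) (bcJ N lam a J δ (a + 2) ↑y) - t (a + 1) (γ y))⁻¹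
                    else 1) := by
            apply Finset.sum_congr rfl
            intro δ _
            apply Finset.sum_congr rfl
            intro γ _
            exact prodEq N lam t a ha J s hsa δ γ
        _ = _ := by
            apply Finset.sum_congr rfl
            intro δ _
            rw [Finset.mul_sum]
    rw [Finset.sum_congr rfl hws, Finset.sum_comm]
    apply Finset.sum_eq_zero
    intro δ _
    rw [← Finset.mul_sum]
    rw [key_s8 (lseq N lam a) (lseq N lam (a + 2)) (t (a + 1)) (tcoord N lam t a)
      (tcoord N lam t (a + 2)) (hsimple (a + 1) ha) hxu hxv hb
      (Finset.univ.filter (fun s => (J s : ℕ) = a))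
      (Finset.univ.filter (fun r => a + 1 ≤ (J r : ℕ)))
      (Finset.univ.filter (fun r => a + 2 ≤ (J r : ℕ)))
      (by
        intro r hr hrT
        have h1 := (Finset.mem_filter.mp hr).2
        have h2 := (Finset.mem_filter.mp hrT).2
        omega)
      (by
        intro r hr
        have h2 := (Finset.mem_filter.mp hr).2
        exact Finset.mem_filter.mpr ⟨Finset.mem_univ r, by omega⟩)
      (bcJ N lam a J δ a) (bcJ N lam a J δ (a + 2))
      (fun r hr => d_lt N lam a J δ ((memAT r).mp hr))
      (fun r₁ h₁ r₂ h₂ h => d_inj N lam a J δ ((memAT r₁).mp h₁) ((memAT r₂).mp h₂) h)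
      (fun k hk => by
        obtain ⟨r, hr1, hr2⟩ := d_surj N lam a J δ hk
        exact ⟨r, (memAT r).mpr hr1, hr2⟩)
      (fun r hr => e_lt N lam a J δ ((memT' r).mp hr))
      (fun r₁ h₁ r₂ h₂ h => e_inj N lam a J δ ((memT' r₁).mp h₁) ((memT' r₂).mp h₂) h)
      (fun k hk => by
        obtain ⟨r, hr1, hr2⟩ := e_surj N lam a J δ hk
        exact ⟨r, (memT' r).mpr hr1, hr2⟩)]
    exact mul_zero _
section Final

lemma glAct_comm_formula (N n : ℕ) (a b c : Fin N) (hab : a ≠ b)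
    (v : (Fin n → Fin N) → ℂ) (J : Fin n → Fin N) :
    glAct N n a b v J
      = glAct N n a c (glAct N n c b v) J - glAct N n c b (glAct N n a c v) J := by
  classical
  have hT1 : glAct N n a c (glAct N n c b v) J
      = (∑ s : Fin n, if J s = a then v (Function.update J s b) else 0)
        + ∑ s : Fin n, ∑ s' ∈ Finset.univ.erase s,
            (if J s = a ∧ J s' = c then
              v (Function.update (Function.update J s c) s' b) else 0) := by
    show (∑ s : Fin n, if J s = a then
        (∑ s' : Fin n, if (Function.update J s c) s' = c then
          v (Function.update (Function.update J s c) s' b) else 0) else 0) = _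
    rw [← Finset.sum_add_distrib]
    apply Finset.sum_congr rfl
    intro s _
    by_cases hsa : J s = a
    · rw [if_pos hsa]
      rw [← Finset.add_sum_erase _ _ (Finset.mem_univ s)]
      rw [if_pos hsa]
      congr 1
      · rw [if_pos (Function.update_self s c J), Function.update_idem]
      · apply Finset.sum_congr rfl
        intro s' hs'
        have hne : s' ≠ s := (Finset.mem_erase.mp hs').1
        rw [Function.update_of_ne hne]
        by_cases h2 : J s' = c
        · rw [if_pos h2, if_pos ⟨hsa, h2⟩]
        · rw [if_neg h2, if_neg (fun h => h2 h.2)]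
    · rw [if_neg hsa, if_neg hsa, zero_add]
      exact (Finset.sum_eq_zero (fun s' _ => if_neg (fun h => hsa h.1))).symm
  have hT2 : glAct N n c b (glAct N n a c v) J
      = ∑ s' : Fin n, ∑ s ∈ Finset.univ.erase s',
          (if J s' = c ∧ J s = a then
            v (Function.update (Function.update J s' b) s c) else 0) := by
    show (∑ s' : Fin n, if J s' = c then
        (∑ s : Fin n, if (Function.update J s' b) s = a then
          v (Function.update (Function.update J s' b) s c) else 0) else 0) = _
    apply Finset.sum_congr rfl
    intro s' _
    by_cases h2 : J s' = c
    · rw [if_pos h2]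
      rw [← Finset.add_sum_erase _ _ (Finset.mem_univ s')]
      rw [if_neg (by rw [Function.update_self]; exact fun h => hab h.symm), zero_add]
      apply Finset.sum_congr rfl
      intro s hs
      have hne : s ≠ s' := (Finset.mem_erase.mp hs).1
      rw [Function.update_of_ne hne]
      by_cases hsa : J s = a
      · rw [if_pos hsa, if_pos ⟨h2, hsa⟩]
      · rw [if_neg hsa, if_neg (fun h => hsa h.2)]
    · rw [if_neg h2]
      exact (Finset.sum_eq_zero (fun s _ => if_neg (fun h => h2 h.1))).symm
  have hcross : (∑ s : Fin n, ∑ s' ∈ Finset.univ.erase s,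
        (if J s = a ∧ J s' = c then
          v (Function.update (Function.update J s c) s' b) else 0))
      = ∑ s' : Fin n, ∑ s ∈ Finset.univ.erase s',
          (if J s' = c ∧ J s = a then
            v (Function.update (Function.update J s' b) s c) else 0) := by
    have conv1 : ∀ s : Fin n, (∑ s' ∈ Finset.univ.erase s,
        (if J s = a ∧ J s' = c then
          v (Function.update (Function.update J s c) s' b) else 0))
        = ∑ s' : Fin n, if s' ≠ s then (if J s = a ∧ J s' = c then
            v (Function.update (Function.update J s c) s' b) else 0) else 0 := by
      intro s
      rw [← Finset.filter_ne' Finset.univ s, Finset.sum_filter]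
    have conv2 : ∀ s' : Fin n, (∑ s ∈ Finset.univ.erase s',
        (if J s' = c ∧ J s = a then
          v (Function.update (Function.update J s' b) s c) else 0))
        = ∑ s : Fin n, if s ≠ s' then (if J s' = c ∧ J s = a then
            v (Function.update (Function.update J s' b) s c) else 0) else 0 := by
      intro s'
      rw [← Finset.filter_ne' Finset.univ s', Finset.sum_filter]
    rw [Finset.sum_congr rfl (fun s _ => conv1 s), Finset.sum_congr rfl (fun s' _ => conv2 s'),
      Finset.sum_comm]
    apply Finset.sum_congr rfl
    intro s' _
    apply Finset.sum_congr rfl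
    intro s _
    by_cases hne : s' ≠ s
    · rw [if_pos hne, if_pos (Ne.symm hne)]
      by_cases hc : J s = a ∧ J s' = c
      · rw [if_pos hc, if_pos ⟨hc.2, hc.1⟩, Function.update_comm (Ne.symm hne)]
      · rw [if_neg hc, if_neg (fun h => hc ⟨h.2, h.1⟩)]
    · rw [if_neg hne, if_neg (fun h => hne (Ne.symm h))]
  rw [hT1, hT2, ← hcross]
  show (∑ s : Fin n, if J s = a then v (Function.update J s b) else 0) = _
  ring

lemma glAct_of_zero (N n : ℕ) (a b : Fin N) : glAct N n a b 0 = 0 := by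
  funext J
  show (∑ s : Fin n, if J s = a then (0 : ℂ) else 0) = 0
  simp

lemma glAct_vanish (N n : ℕ) (a b c : Fin N) (hab : a ≠ b)
    (v : (Fin n → Fin N) → ℂ) (h1 : glAct N n c b v = 0) (h2 : glAct N n a c v = 0) :
    glAct N n a b v = 0 := by
  funext J
  rw [glAct_comm_formula N n a b c hab v J, h1, h2, glAct_of_zero, glAct_of_zero]
  show (0 : ℂ) - 0 = 0
  ring

lemma offdiag (N : ℕ) (lam : Fin N → ℕ) (t : (a : ℕ) → Fin (lseq N lam a) → ℂ)
    (hsimple : ∀ a < N, Function.Injective (t a))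
    (hdisj : ∀ a : ℕ, 1 ≤ a → a < N →
      ∀ (j : Fin (lseq N lam a)) (j' : Fin (lseq N lam (a - 1))), t a j ≠ t (a - 1) j')
    (hBAE : BAE N lam t) :
    ∀ g : ℕ, ∀ a b : Fin N, (b : ℕ) = (a : ℕ) + g → a < b →
      glAct N (lseq N lam 0) a b (weightFun N lam t) = 0 := by
  intro g
  induction g using Nat.strong_induction_on with
  | _ g IH =>
    intro a b hg hab
    have hval : (a : ℕ) < (b : ℕ) := hab
    rcases Nat.lt_or_ge g 2 with h2 | h2
    · have hg1 : g = 1 := by omega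
      subst hg1
      obtain ⟨av, hav⟩ := a
      obtain ⟨bv, hbv⟩ := b
      have hbv' : bv = av + 1 := hg
      subst hbv'
      exact mainstep N lam t hsimple hdisj hBAE av hbv hav
    · have hc : (a : ℕ) + 1 < N := by have := b.isLt; omega
      set c : Fin N := ⟨(a : ℕ) + 1, hc⟩ with hcdef
      apply glAct_vanish N (lseq N lam 0) a b c (Fin.ne_of_lt hab) (weightFun N lam t)
      · apply IH (g - 1) (by omega) c b (by rw [hcdef]; show (b : ℕ) = (a : ℕ) + 1 + (g - 1); omega)
        show (c : ℕ) < (b : ℕ)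
        rw [hcdef]
        show (a : ℕ) + 1 < (b : ℕ)
        omega
      · apply IH 1 (by omega) a c (by rw [hcdef]) 
        show (a : ℕ) < (c : ℕ)
        rw [hcdef]
        show (a : ℕ) < (a : ℕ) + 1
        omega

lemma diag (N : ℕ) (lam : Fin N → ℕ) (t : (a : ℕ) → Fin (lseq N lam a) → ℂ)
    (a : Fin N) :
    glAct N (lseq N lam 0) a a (weightFun N lam t) = (lam a : ℂ) • weightFun N lam t := by
  classical
  funext J
  show (∑ s : Fin (lseq N lam 0), if J s = a then
      weightFun N lam t (Function.update J s a) else 0) = (lam a : ℂ) * weightFun N lam t J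
  have hupd : ∀ s, J s = a → Function.update J s a = J := by
    intro s h
    rw [← h]
    exact Function.update_eq_self s J
  have hconst : (∑ s : Fin (lseq N lam 0), if J s = a then
      weightFun N lam t (Function.update J s a) else 0)
      = (Finset.univ.filter (fun s => J s = a)).card • weightFun N lam t J := by
    rw [← Finset.sum_filter,
      Finset.sum_congr rfl (fun s hs => by rw [hupd s (Finset.mem_filter.mp hs).2]),
      Finset.sum_const]
  rw [hconst]
  by_cases hadm : IsAdmissible N lam J
  · have hcnt : ∀ i : ℕ, (Finset.univ.filter (fun s => i ≤ (J s : ℕ))).card = lseq N lam i := by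
      intro i
      rcases Nat.eq_zero_or_pos i with h0 | hpos
      · subst h0
        rw [Finset.filter_true_of_mem (fun s _ => Nat.zero_le _)]
        rw [Finset.card_univ, Fintype.card_fin]
      · by_cases hiN : i < N
        · exact hadm i (Finset.mem_Ico.mpr ⟨hpos, hiN⟩)
        · have hempty : (Finset.univ.filter (fun s : Fin (lseq N lam 0) => i ≤ (J s : ℕ))) = ∅ := by
            apply Finset.filter_eq_empty_iff.mpr
            intro s _
            have := (J s).isLt
            omega
          rw [hempty, Finset.card_empty, lseq_zero_of_ge N lam (by omega)]
    have hcard : (Finset.univ.filter (fun s => J s = a)).card = lam a := by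
      have hsplit : Finset.univ.filter (fun s => J s = a)
          = (Finset.univ.filter (fun s => (a : ℕ) ≤ (J s : ℕ)))
            \ (Finset.univ.filter (fun s => (a : ℕ) + 1 ≤ (J s : ℕ))) := by
        ext s
        simp only [Finset.mem_filter, Finset.mem_sdiff, Finset.mem_univ, true_and, not_le,
          Fin.ext_iff]
        omega
      rw [hsplit, Finset.card_sdiff_of_subset (by
        intro s hs
        have := (Finset.mem_filter.mp hs).2
        exact Finset.mem_filter.mpr ⟨Finset.mem_univ s, by omega⟩), hcnt, hcnt]
      have hstep := lseq_succ_eq N lam a.isLt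
      rw [Fin.eta] at hstep
      omega
    rw [hcard, nsmul_eq_mul]
  · have hw : weightFun N lam t J = 0 := by
      simp only [weightFun, if_neg hadm]
    rw [hw, smul_zero, mul_zero]

end Final

/-- if `t` has pairwise distinct coordinates in each level, disjoint
consecutive levels, and satisfies the Bethe ansatz equations, then `ω(t)` is a
singular vector of weight `λ` in `(ℂ^N)^{⊗n}`. -/
theorem statement8 (N : ℕ) (hN : 1 ≤ N) (lam : Fin N → ℕ) (hlam : Antitone lam)
    (t : (a : ℕ) → Fin (lseq N lam a) → ℂ)
    (hsimple : ∀ a < N, Function.Injective (t a))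
    (hdisj : ∀ a : ℕ, 1 ≤ a → a < N →
      ∀ (j : Fin (lseq N lam a)) (j' : Fin (lseq N lam (a - 1))), t a j ≠ t (a - 1) j')
    (hBAE : BAE N lam t) :
    (∀ a b : Fin N, a < b → glAct N (lseq N lam 0) a b (weightFun N lam t) = 0) ∧
    (∀ a : Fin N,
      glAct N (lseq N lam 0) a a (weightFun N lam t) = (lam a : ℂ) • weightFun N lam t) := by
  constructor
  · intro a b hab
    exact offdiag N lam t hsimple hdisj hBAE ((b : ℕ) - (a : ℕ)) a b
      (by have h : (a : ℕ) < (b : ℕ) := hab; omega) hab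
  · intro a
    exact diag N lam t a
end
end

section
/- Let X ∈ Ω_λ be generic and let z ∈ ℂ be a root of y_0 (the monic polynomial proportional to the Wronskian of a basis of X). Then the set of orders of vanishing at z of the nonzero elements of X is exactly {0, 1, …, N−2, N}: for each m in this set there exists f ∈ X, f ≠ 0, vanishing to order exactly m at z, and no nonzero element of X vanishes to order N−1 or to order greater than N at z. (This expresses that the exponents of the associated operator D_X at each root of y_0 are 0, 1, …, N−2, N.) -/
open Polynomial

noncomputable section

namespace St13

lemma dvd_step (z : ℂ) (m : ℕ) (p : ℂ[X]) (hp : (X - C z) ^ m ∣ p) :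
    (X - C z) ^ (m - 1) ∣ derivative p := by
  obtain ⟨q, rfl⟩ := hp
  rw [derivative_mul, derivative_X_sub_C_pow]
  refine dvd_add (Dvd.dvd.mul_right (Dvd.dvd.mul_left dvd_rfl _) _) ?_
  exact Dvd.dvd.mul_right (pow_dvd_pow _ (Nat.sub_le _ _)) _

lemma dvd_iter (z : ℂ) (m : ℕ) (p : ℂ[X]) (hp : (X - C z) ^ m ∣ p) (k : ℕ) :
    (X - C z) ^ (m - k) ∣ derivative^[k] p := by
  induction k generalizing m p with
  | zero => simpa using hp
  | succ k ih =>
    rw [Function.iterate_succ', Function.comp_apply]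
    have := dvd_step z (m - k) _ (ih m p hp)
    rwa [Nat.sub_sub] at this

lemma sum_fin_id (n : ℕ) : (∑ i : Fin n, (i : ℕ)) = n.choose 2 := by
  rw [Fin.sum_univ_eq_sum_range (fun i => i) n, Finset.sum_range_id, Nat.choose_two_right]

lemma E1 {p : ℂ[X]} {z : ℂ} {j : ℕ} (hj : j < rootMultiplicity z p) :
    eval z (derivative^[j] p) = 0 :=
  isRoot_iterate_derivative_of_lt_rootMultiplicity hj

lemma E2 {p : ℂ[X]} (hp : p ≠ 0) (z : ℂ) :
    eval z (derivative^[rootMultiplicity z p] p) ≠ 0 := by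
  intro h
  have : rootMultiplicity z p < rootMultiplicity z p := by
    refine lt_rootMultiplicity_of_isRoot_iterate_derivative hp fun m hm => ?_
    rcases lt_or_eq_of_le hm with hlt | rfl
    · exact E1 hlt
    · exact h
  omega

lemma ord_le {z : ℂ} {p : ℂ[X]} (hp : p ≠ 0) : rootMultiplicity z p ≤ p.natDegree := by
  have h := Polynomial.pow_rootMultiplicity_dvd p z
  have := Polynomial.natDegree_le_of_dvd h hp
  simpa [Polynomial.natDegree_pow, Polynomial.natDegree_X_sub_C] using this

lemma iter_deriv_add (k : ℕ) (p q : ℂ[X]) :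
    derivative^[k] (p + q) = derivative^[k] p + derivative^[k] q := by
  simp only [← Module.End.pow_apply, map_add]

lemma iter_deriv_smul (k : ℕ) (c : ℂ) (p : ℂ[X]) :
    derivative^[k] (c • p) = c • derivative^[k] p := by
  simp only [← Module.End.pow_apply, map_smul]

lemma iter_deriv_sub (k : ℕ) (p q : ℂ[X]) :
    derivative^[k] (p - q) = derivative^[k] p - derivative^[k] q := by
  simp only [← Module.End.pow_apply, map_sub]

lemma strictMono_shift {n : ℕ} {t : Fin n → ℕ} (ht : StrictMono t) :
    ∀ (d : ℕ) (i j : Fin n), (j : ℕ) = (i : ℕ) + d → t i + d ≤ t j := by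
  intro d
  induction d with
  | zero =>
    intro i j h
    have hij : i = j := Fin.ext (by omega)
    subst hij; omega
  | succ d ih =>
    intro i j h
    have hj : (i : ℕ) + d < n := by have := j.isLt; omega
    have h1 := ih i ⟨(i : ℕ) + d, hj⟩ rfl
    have h2 : t ⟨(i : ℕ) + d, hj⟩ < t j := ht (by simp [Fin.lt_def]; omega)
    omega

lemma strictMono_ge {n : ℕ} {t : Fin n → ℕ} (ht : StrictMono t) (i : Fin n) :
    (i : ℕ) ≤ t i := by
  have h0 : (0 : ℕ) < n := i.pos
  have := strictMono_shift ht (i : ℕ) ⟨0, h0⟩ i (by simp)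
  omega

lemma card_sum_ge (n : ℕ) (T : Finset ℕ) (hc : T.card = n) :
    n.choose 2 ≤ ∑ x ∈ T, x := by
  classical
  set t := T.orderEmbOfFin hc with ht
  have himg : Finset.image (fun i => t i) Finset.univ = T := by
    apply Finset.coe_injective
    rw [Finset.coe_image, Finset.coe_univ, Set.image_univ]
    exact T.range_orderEmbOfFin hc
  have hsum : ∑ x ∈ T, x = ∑ i : Fin n, t i := by
    rw [← himg, Finset.sum_image (fun a _ b _ hab => t.injective hab)]
  rw [hsum, ← sum_fin_id n]
  exact Finset.sum_le_sum fun i _ => strictMono_ge t.strictMono i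

lemma card_sum_eq (n : ℕ) (hn : 1 ≤ n) (T : Finset ℕ) (hc : T.card = n)
    (hs : ∑ x ∈ T, x = n.choose 2 + 1) :
    ∀ k : ℕ, k ∈ T ↔ (k + 2 ≤ n ∨ k = n) := by
  classical
  set t := T.orderEmbOfFin hc with ht
  have himg : Finset.image (fun i => t i) Finset.univ = T := by
    apply Finset.coe_injective
    rw [Finset.coe_image, Finset.coe_univ, Set.image_univ]
    exact T.range_orderEmbOfFin hc
  have hsum : ∑ x ∈ T, x = ∑ i : Fin n, t i := by
    rw [← himg, Finset.sum_image (fun a _ b _ hab => t.injective hab)]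
  have hge : ∀ i : Fin n, (i : ℕ) ≤ t i := fun i => strictMono_ge t.strictMono i
  have hTe : ∑ i : Fin n, ((t i : ℕ) - (i : ℕ)) = 1 := by
    rw [Finset.sum_tsub_distrib Finset.univ (fun i _ => hge i), ← hsum, hs, sum_fin_id]
    omega
  set L : Fin n := ⟨n - 1, by omega⟩ with hL
  have hmax : ∀ i : Fin n, (t i : ℕ) - (i : ℕ) ≤ (t L : ℕ) - (L : ℕ) := by
    intro i
    have hi : (i : ℕ) ≤ n - 1 := by have := i.isLt; omega
    have h1 := strictMono_shift t.strictMono ((n - 1) - (i : ℕ)) i L ?_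
    · have := hge i; omega
    · simp [hL]; omega
  have hLv : (t L : ℕ) - (L : ℕ) = 1 := by
    have h1 : (t L : ℕ) - (L : ℕ) ≤ ∑ i : Fin n, ((t i : ℕ) - (i : ℕ)) :=
      Finset.single_le_sum (f := fun i : Fin n => (t i : ℕ) - (i : ℕ))
        (fun i _ => Nat.zero_le _) (Finset.mem_univ L)
    have h2 : (t L : ℕ) - (L : ℕ) ≠ 0 := by
      intro h0
      have : ∑ i : Fin n, ((t i : ℕ) - (i : ℕ)) = 0 :=
        Finset.sum_eq_zero fun i _ => by have := hmax i; omega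
      omega
    omega
  have hothers : ∀ i : Fin n, i ≠ L → (t i : ℕ) = (i : ℕ) := by
    intro i hiL
    by_contra hne
    have h1 : 1 ≤ (t i : ℕ) - (i : ℕ) := by have := hge i; omega
    have hmem : i ∈ Finset.univ.erase L := Finset.mem_erase.2 ⟨hiL, Finset.mem_univ i⟩
    have h3 : ((t L : ℕ) - (L : ℕ)) + ∑ j ∈ Finset.univ.erase L, ((t j : ℕ) - (j : ℕ)) =
        ∑ j : Fin n, ((t j : ℕ) - (j : ℕ)) :=
      Finset.add_sum_erase Finset.univ (fun j : Fin n => (t j : ℕ) - (j : ℕ))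
        (Finset.mem_univ L)
    have h4 : (t i : ℕ) - (i : ℕ) ≤ ∑ j ∈ Finset.univ.erase L, ((t j : ℕ) - (j : ℕ)) :=
      Finset.single_le_sum (f := fun j : Fin n => (t j : ℕ) - (j : ℕ))
        (fun j _ => Nat.zero_le _) hmem
    omega
  have hLval : (t L : ℕ) = n := by
    have h5 : (L : ℕ) = n - 1 := rfl
    omega
  intro k
  constructor
  · intro hk
    rw [← himg, Finset.mem_image] at hk
    obtain ⟨i, _, hi⟩ := hk
    by_cases hiL : i = L
    · right; rw [← hi, hiL, hLval]
    · left
      have h6 := hothers i hiL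
      have hi2 : (i : ℕ) ≠ n - 1 := fun h => hiL (Fin.ext h)
      have := i.isLt
      omega
  · intro hk
    rw [← himg, Finset.mem_image]
    rcases hk with hk | hk
    · refine ⟨⟨k, by omega⟩, Finset.mem_univ _, ?_⟩
      have hne : (⟨k, by omega⟩ : Fin n) ≠ L := by
        intro hcon
        have := congrArg Fin.val hcon
        simp [hL] at this
        omega
      rw [hothers _ hne]
    · exact ⟨L, Finset.mem_univ _, by rw [hLval, hk]⟩

lemma sum_ord_ge {n : ℕ} (m : Fin n → ℕ) (hinj : Function.Injective m) :
    n.choose 2 ≤ ∑ i, m i := by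
  classical
  have himg : (Finset.image m Finset.univ).card = n := by
    rw [Finset.card_image_of_injective _ hinj, Finset.card_univ, Fintype.card_fin]
  have h2 := card_sum_ge n _ himg
  rwa [Finset.sum_image (fun a _ b _ h => hinj h)] at h2

lemma lemA {n : ℕ} (z : ℂ) (h : Fin n → ℂ[X]) (m : Fin n → ℕ)
    (hm : ∀ i, (X - C z) ^ (m i) ∣ h i) :
    (X - C z) ^ ((∑ i, m i) - n.choose 2) ∣ _root_.wronskian h := by
  classical
  unfold _root_.wronskian
  rw [Matrix.det_apply]
  refine Finset.dvd_sum fun σ _ => ?_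
  have hprod : (X - C z) ^ (∑ i : Fin n, (m (σ i) - (i : ℕ))) ∣
      ∏ i : Fin n, (Matrix.of fun i j : Fin n =>
        (⇑derivative : ℂ[X] → ℂ[X])^[(j : ℕ)] (h i)) (σ i) i := by
    rw [← Finset.prod_pow_eq_pow_sum]
    exact Finset.prod_dvd_prod_of_dvd _ _ fun i _ => dvd_iter z (m (σ i)) (h (σ i)) (hm _) _
  have hle : (∑ i, m i) - n.choose 2 ≤ ∑ i : Fin n, (m (σ i) - (i : ℕ)) := by
    have h1 : ∑ i : Fin n, m (σ i) = ∑ i, m i := Equiv.sum_comp σ m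
    have h2 : ∑ i : Fin n, m (σ i) ≤ ∑ i : Fin n, ((m (σ i) - (i : ℕ)) + (i : ℕ)) :=
      Finset.sum_le_sum fun i _ => by omega
    rw [Finset.sum_add_distrib, sum_fin_id] at h2
    omega
  have hdvd := (pow_dvd_pow (X - C z) hle).trans hprod
  rw [Units.smul_def, zsmul_eq_mul]
  exact hdvd.mul_left _

lemma lemB {n : ℕ} (z : ℂ) (m : Fin n → ℕ) (hinj : Function.Injective m) :
    ∃ d : ℂ, d ≠ 0 ∧ _root_.wronskian (fun i => (X - C z) ^ (m i)) =
      C d * (X - C z) ^ ((∑ i, m i) - n.choose 2) := by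
  classical
  set W : Matrix (Fin n) (Fin n) ℂ :=
    Matrix.of fun i j : Fin n => ((m i).descFactorial (j : ℕ) : ℂ) with hW
  refine ⟨W.det, ?_, ?_⟩
  · have hW2 : W = Matrix.of fun i j : Fin n =>
        (descPochhammer ℂ (j : ℕ)).eval ((m i : ℂ)) := by
      ext i j
      simp [hW, descPochhammer_eval_eq_descFactorial]
    rw [hW2, ← Matrix.det_eval_matrixOfPolynomials_eq_det_vandermonde
      (fun i => (m i : ℂ)) (fun j => descPochhammer ℂ (j : ℕ))
      (fun i => descPochhammer_natDegree (R := ℂ) _) (fun i => monic_descPochhammer ℂ _)]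
    rw [Ne, Matrix.det_vandermonde_eq_zero_iff]
    rintro ⟨i, j, hij, hne⟩
    exact hne (hinj (Nat.cast_injective hij))
  · unfold _root_.wronskian
    rw [Matrix.det_apply, Matrix.det_apply, map_sum, Finset.sum_mul]
    refine Finset.sum_congr rfl fun σ _ => ?_
    simp only [Matrix.of_apply, hW]
    simp only [iterate_derivative_X_sub_pow]
    by_cases hall : ∀ i : Fin n, (i : ℕ) ≤ m (σ i)
    · have hpt : ∀ i : Fin n,
          ((m (σ i)).descFactorial (i : ℕ)) • (X - C z) ^ (m (σ i) - (i : ℕ)) =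
          C (((m (σ i)).descFactorial (i : ℕ) : ℂ)) * (X - C z) ^ (m (σ i) - (i : ℕ)) := by
        intro i
        rw [← smul_eq_C_mul, ← Nat.cast_smul_eq_nsmul ℂ]
      rw [Finset.prod_congr rfl fun i _ => hpt i, Finset.prod_mul_distrib,
        ← map_prod (C : ℂ →+* ℂ[X]), Finset.prod_pow_eq_pow_sum]
      have hsum : ∑ i : Fin n, (m (σ i) - (i : ℕ)) = (∑ i, m i) - n.choose 2 := by
        rw [Finset.sum_tsub_distrib Finset.univ (fun i _ => hall i), Equiv.sum_comp σ m,
          sum_fin_id]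
      rw [hsum, Units.smul_def, Units.smul_def, zsmul_eq_mul, zsmul_eq_mul, map_mul,
        ← mul_assoc]
      congr 2
    · push_neg at hall
      obtain ⟨i0, hi0⟩ := hall
      have hz1 : ∏ i : Fin n,
          ((m (σ i)).descFactorial (i : ℕ)) • (X - C z) ^ (m (σ i) - (i : ℕ)) = 0 :=
        Finset.prod_eq_zero (Finset.mem_univ i0) (by
          rw [Nat.descFactorial_eq_zero_iff_lt.2 hi0, zero_smul])
      have hz2 : ∏ i : Fin n, ((m (σ i)).descFactorial (i : ℕ) : ℂ) = 0 :=
        Finset.prod_eq_zero (Finset.mem_univ i0) (by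
          rw [Nat.descFactorial_eq_zero_iff_lt.2 hi0, Nat.cast_zero])
      rw [hz1, hz2, smul_zero, smul_zero, map_zero, zero_mul]

lemma lemC {n : ℕ} (z : ℂ) (h : Fin n → ℂ[X]) (hh : ∀ i, h i ≠ 0)
    (hinj : Function.Injective fun i => rootMultiplicity z (h i)) :
    _root_.wronskian h ≠ 0 ∧ rootMultiplicity z (_root_.wronskian h)
      = (∑ i, rootMultiplicity z (h i)) - n.choose 2 := by
  classical
  set v : ℂ[X] := X - C z with hv
  set m : Fin n → ℕ := fun i => rootMultiplicity z (h i) with hm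
  set D : ℕ := (∑ i, m i) - n.choose 2 with hD
  have hDsum : n.choose 2 ≤ ∑ i, m i := sum_ord_ge m hinj
  have hdecomp : ∀ i, ∃ qq : ℂ[X], h i = v ^ (m i) * qq ∧ eval z qq ≠ 0 := by
    intro i
    obtain ⟨qq, hq1, hq2⟩ := (h i).exists_eq_pow_rootMultiplicity_mul_and_not_dvd (hh i) z
    exact ⟨qq, hq1, fun hev => hq2 (dvd_iff_isRoot.2 hev)⟩
  choose q hq hqz using hdecomp
  set c : Fin n → ℂ := fun i => eval z (q i) with hc
  set a : Fin n → ℂ[X] := fun i => c i • v ^ (m i) with ha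
  set b : Fin n → ℂ[X] := fun i => h i - a i with hb
  have hab : ∀ i, h i = a i + b i := fun i => by
    show h i = a i + (h i - a i); ring
  have hbdvd : ∀ i, v ^ (m i + 1) ∣ b i := by
    intro i
    have hbi : b i = v ^ (m i) * (q i - C (c i)) := by
      show h i - c i • v ^ (m i) = _
      rw [hq i, smul_eq_C_mul]
      ring
    rw [hbi, pow_succ]
    refine mul_dvd_mul dvd_rfl (dvd_iff_isRoot.2 ?_)
    simp [IsRoot, hc]
  set RowF : ℂ[X] → (Fin n → ℂ[X]) := fun p j => derivative^[(j : ℕ)] p with hRowF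
  set RA : Fin n → (Fin n → ℂ[X]) := fun i => RowF (a i) with hRA
  set RB : Fin n → (Fin n → ℂ[X]) := fun i => RowF (b i) with hRB
  have hsplit : _root_.wronskian h =
      ∑ S : Finset (Fin n), Matrix.detRowAlternating (S.piecewise RA RB) := by
    have hMat : (Matrix.of fun i j : Fin n =>
        (⇑derivative : ℂ[X] → ℂ[X])^[(j : ℕ)] (h i)) = RA + RB := by
      funext i j
      show derivative^[(j : ℕ)] (h i) = RA i j + RB i j
      rw [hab i, iter_deriv_add]
    show (Matrix.of fun i j : Fin n =>
        (⇑derivative : ℂ[X] → ℂ[X])^[(j : ℕ)] (h i)).det = _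
    rw [hMat]
    exact (Matrix.detRowAlternating.toMultilinearMap).map_add_univ RA RB
  have hterm : ∀ S : Finset (Fin n),
      Matrix.detRowAlternating (S.piecewise RA RB) =
      _root_.wronskian (fun i => if i ∈ S then a i else b i) := by
    intro S
    show _ = (Matrix.of fun i j : Fin n =>
        (⇑derivative : ℂ[X] → ℂ[X])^[(j : ℕ)] (if i ∈ S then a i else b i)).det
    congr 1
    funext i j
    show (S.piecewise RA RB) i j = derivative^[(j : ℕ)] (if i ∈ S then a i else b i)
    by_cases hiS : i ∈ S
    · rw [Finset.piecewise_eq_of_mem _ _ _ hiS, if_pos hiS]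
    · rw [Finset.piecewise_eq_of_notMem _ _ _ hiS, if_neg hiS]
  obtain ⟨d, hd0, hdeq⟩ := lemB z m hinj
  have hPow : RA = fun i => (C (c i) : ℂ[X]) •
      (fun jj : Fin n => derivative^[(jj : ℕ)] (v ^ (m i))) := by
    funext i j
    show derivative^[(j : ℕ)] (c i • v ^ (m i)) = C (c i) * derivative^[(j : ℕ)] (v ^ (m i))
    rw [iter_deriv_smul, smul_eq_C_mul]
  rw [← hD, ← hv] at hdeq
  have huniv : Matrix.detRowAlternating ((Finset.univ : Finset (Fin n)).piecewise RA RB)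
      = C ((∏ i, c i) * d) * v ^ D := by
    rw [Finset.piecewise_univ, hPow]
    refine ((Matrix.detRowAlternating.toMultilinearMap).map_smul_univ
      (fun i => (C (c i) : ℂ[X]))
      (fun i => (fun jj : Fin n => derivative^[(jj : ℕ)] (v ^ (m i))))).trans ?_
    show (∏ i, (C (c i) : ℂ[X])) • _root_.wronskian (fun i => v ^ (m i)) = _
    rw [hdeq, smul_eq_mul, ← map_prod (C : ℂ →+* ℂ[X]), ← mul_assoc, ← map_mul]
  have hdvdS : ∀ S : Finset (Fin n), S ≠ Finset.univ →
      v ^ (D + 1) ∣ Matrix.detRowAlternating (S.piecewise RA RB) := by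
    intro S hS
    rw [hterm S]
    set m' : Fin n → ℕ := fun i => if i ∈ S then m i else m i + 1 with hm'
    have hd : ∀ i, (X - C z) ^ (m' i) ∣ (if i ∈ S then a i else b i) := by
      intro i
      by_cases hiS : i ∈ S
      · simp only [hm', if_pos hiS]
        show (X - C z) ^ (m i) ∣ c i • v ^ (m i)
        rw [smul_eq_C_mul, hv]
        exact dvd_mul_left _ _
      · simp only [hm', if_neg hiS]
        exact hbdvd i
    have hA := lemA z _ m' hd
    rw [← hv] at hA
    refine (pow_dvd_pow v ?_).trans hA
    have hlt : ∑ i, m i < ∑ i, m' i := by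
      obtain ⟨i0, hi0⟩ : ∃ i0, i0 ∉ S := by
        by_contra hcon
        push_neg at hcon
        exact hS (Finset.eq_univ_iff_forall.2 hcon)
      refine Finset.sum_lt_sum (fun i _ => ?_) ⟨i0, Finset.mem_univ _, ?_⟩
      · by_cases hiS : i ∈ S <;> simp [hm', hiS]
      · simp [hm', hi0]
    omega
  have hsum2 : Matrix.detRowAlternating ((Finset.univ : Finset (Fin n)).piecewise RA RB) +
      ∑ S ∈ (Finset.univ : Finset (Finset (Fin n))).erase Finset.univ,
        Matrix.detRowAlternating (S.piecewise RA RB) =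
      ∑ S : Finset (Fin n), Matrix.detRowAlternating (S.piecewise RA RB) :=
    Finset.add_sum_erase _
      (fun S : Finset (Fin n) => Matrix.detRowAlternating (S.piecewise RA RB))
      (Finset.mem_univ _)
  have hr : v ^ (D + 1) ∣ ∑ S ∈ (Finset.univ : Finset (Finset (Fin n))).erase Finset.univ,
      Matrix.detRowAlternating (S.piecewise RA RB) :=
    Finset.dvd_sum fun S hS => hdvdS S (Finset.mem_erase.1 hS).1
  obtain ⟨w, hw⟩ := hr
  set e : ℂ := (∏ i, c i) * d with he
  have he0 : e ≠ 0 := mul_ne_zero (Finset.prod_ne_zero_iff.2 fun i _ => hqz i) hd0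
  have hWr : _root_.wronskian h = v ^ D * (C e + v * w) := by
    rw [hsplit, ← hsum2, huniv, hw, pow_succ]
    ring
  have hu0 : eval z (C e + v * w) = e := by simp [hv]
  have hune : (C e + v * w) ≠ 0 := fun hcon => he0 (by rw [← hu0, hcon, eval_zero])
  have hvD : (v : ℂ[X]) ^ D ≠ 0 := pow_ne_zero _ (by rw [hv]; exact X_sub_C_ne_zero z)
  constructor
  · rw [hWr]
    exact mul_ne_zero hvD hune
  · rw [hWr, rootMultiplicity_mul (mul_ne_zero hvD hune)]
    have h1 : rootMultiplicity z (v ^ D) = D := by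
      rw [hv]
      exact rootMultiplicity_X_sub_C_pow z D
    have h2 : rootMultiplicity z (C e + v * w) = 0 :=
      rootMultiplicity_eq_zero (by rw [IsRoot, hu0]; exact he0)
    rw [h1, h2, add_zero]


lemma iter_deriv_sum (k : ℕ) {ι : Type*} (s : Finset ι) (f : ι → ℂ[X]) :
    derivative^[k] (∑ i ∈ s, f i) = ∑ i ∈ s, derivative^[k] (f i) := by
  simp only [← Module.End.pow_apply, map_sum]

lemma wr_row_ne {n : ℕ} (g : Fin n → ℂ[X]) (hw : _root_.wronskian g ≠ 0) (i : Fin n) :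
    g i ≠ 0 := by
  intro h0
  apply hw
  unfold _root_.wronskian
  refine Matrix.det_eq_zero_of_row_eq_zero i fun j => ?_
  simp [h0, Polynomial.iterate_derivative_zero]

lemma lemF {n : ℕ} (z : ℂ) (g : Fin n → ℂ[X]) (h0 : ∀ i, g i ≠ 0)
    (hinj : Function.Injective fun i => rootMultiplicity z (g i)) :
    LinearIndependent ℂ g := by
  classical
  rw [Fintype.linearIndependent_iff]
  intro co hco
  by_contra hne
  push_neg at hne
  obtain ⟨i1, hi1⟩ := hne
  set s : Finset (Fin n) := Finset.univ.filter (fun i => co i ≠ 0) with hs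
  have hsne : s.Nonempty := ⟨i1, by simp [hs, hi1]⟩
  obtain ⟨i0, hi0mem, hi0min⟩ := s.exists_min_image (fun i => rootMultiplicity z (g i)) hsne
  have hco0 : co i0 ≠ 0 := (Finset.mem_filter.1 hi0mem).2
  set M := rootMultiplicity z (g i0) with hM
  have happ : eval z (derivative^[M] (∑ i, co i • g i)) = 0 := by rw [hco]; simp
  have hexp : eval z (derivative^[M] (∑ i, co i • g i)) =
      ∑ i, co i * eval z (derivative^[M] (g i)) := by
    rw [iter_deriv_sum, eval_finset_sum]
    refine Finset.sum_congr rfl fun i _ => ?_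
    rw [iter_deriv_smul, smul_eq_C_mul, eval_mul, eval_C]
  have hsingle : ∑ i, co i * eval z (derivative^[M] (g i)) =
      co i0 * eval z (derivative^[M] (g i0)) := by
    refine Finset.sum_eq_single i0 (fun i _ hii0 => ?_) (fun hni => absurd (Finset.mem_univ _) hni)
    by_cases hci : co i = 0
    · rw [hci, zero_mul]
    · have himem : i ∈ s := Finset.mem_filter.2 ⟨Finset.mem_univ _, hci⟩
      have hge : M ≤ rootMultiplicity z (g i) := hi0min i himem
      have hneq : rootMultiplicity z (g i) ≠ M := fun hcon => hii0 (hinj hcon)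
      rw [E1 (lt_of_le_of_ne hge (fun hcon => hneq hcon.symm)), mul_zero]
  rw [hexp, hsingle] at happ
  exact (mul_ne_zero hco0 (E2 (h0 i0) z)) happ

lemma lemD {N : ℕ} (z : ℂ) (Xs : Submodule ℂ ℂ[X]) (B : ℕ)
    (hB : ∀ p ∈ Xs, p ≠ 0 → rootMultiplicity z p ≤ B)
    (f : Fin N → ℂ[X]) (hwf : _root_.wronskian f ≠ 0) :
    ∀ (M : ℕ) (g : Fin N → ℂ[X]), (∀ i, g i ∈ Xs) →
      (∃ c : ℂ, c ≠ 0 ∧ _root_.wronskian g = C c * _root_.wronskian f) →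
      (∑ i, (B + 1 - rootMultiplicity z (g i))) ≤ M →
      ∃ g' : Fin N → ℂ[X], (∀ i, g' i ∈ Xs) ∧
        (∃ c : ℂ, c ≠ 0 ∧ _root_.wronskian g' = C c * _root_.wronskian f) ∧
        Function.Injective (fun i => rootMultiplicity z (g' i)) := by
  intro M
  induction M using Nat.strong_induction_on with
  | _ M IH =>
    intro g hgX hgw hgm
    by_cases hinj : Function.Injective (fun i => rootMultiplicity z (g i))
    · exact ⟨g, hgX, hgw, hinj⟩
    obtain ⟨c, hc0, hceq⟩ := hgw
    have hwg : _root_.wronskian g ≠ 0 := by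
      rw [hceq]
      exact mul_ne_zero (fun hcon => hc0 (C_eq_zero.1 hcon)) hwf
    rw [Function.not_injective_iff] at hinj
    obtain ⟨i, j, hij, hne⟩ := hinj
    have hgnz : ∀ k, g k ≠ 0 := wr_row_ne g hwg
    set mm : ℕ := rootMultiplicity z (g j) with hmm
    have hmi : rootMultiplicity z (g i) = mm := hij
    set aco : ℂ := eval z (derivative^[mm] (g i)) with haco
    set bco : ℂ := eval z (derivative^[mm] (g j)) with hbco
    have ha0 : aco ≠ 0 := by rw [haco, ← hmi]; exact E2 (hgnz i) z
    have hb0 : bco ≠ 0 := E2 (hgnz j) z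
    set w : ℂ[X] := aco • g j - bco • g i with hwdef
    set Mat : Matrix (Fin N) (Fin N) ℂ[X] :=
      Matrix.of fun r k : Fin N => derivative^[(k : ℕ)] (g r) with hMat
    have hCC : (C aco : ℂ[X]) * C (-(bco / aco)) = C (-bco) := by
      rw [← map_mul]
      congr 1
      field_simp
    have hwrow : ∀ k : Fin N, derivative^[(k : ℕ)] w
        = (C aco • (Mat j + C (-(bco / aco)) • Mat i)) k := by
      intro k
      show derivative^[(k : ℕ)] (aco • g j - bco • g i)
          = C aco • (Mat j k + C (-(bco / aco)) • Mat i k)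
      rw [iter_deriv_sub, iter_deriv_smul, iter_deriv_smul]
      show aco • derivative^[(k : ℕ)] (g j) - bco • derivative^[(k : ℕ)] (g i)
          = C aco * (derivative^[(k : ℕ)] (g j) + C (-(bco / aco)) * derivative^[(k : ℕ)] (g i))
      rw [smul_eq_C_mul, smul_eq_C_mul, mul_add, ← mul_assoc, hCC, map_neg, neg_mul]
      ring
    have hupdate : (Matrix.of fun r k : Fin N =>
          derivative^[(k : ℕ)] ((Function.update g j w) r))
        = Mat.updateRow j (C aco • (Mat j + C (-(bco / aco)) • Mat i)) := by
      refine Matrix.ext fun r k => ?_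
      show derivative^[(k : ℕ)] ((Function.update g j w) r) = _
      rw [Matrix.updateRow_apply]
      by_cases hr : r = j
      · subst hr
        rw [if_pos rfl, Function.update_self]
        exact hwrow k
      · rw [if_neg hr, Function.update_of_ne hr]
        rfl
    have hdetnew : _root_.wronskian (Function.update g j w) = C aco * _root_.wronskian g := by
      unfold _root_.wronskian
      rw [hupdate, Matrix.det_updateRow_smul,
        Matrix.det_updateRow_add_smul_self _ (Ne.symm hne) _]
    have hwX : w ∈ Xs := Submodule.sub_mem _ (Submodule.smul_mem _ _ (hgX j))
      (Submodule.smul_mem _ _ (hgX i))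
    have hnewmem : ∀ r, (Function.update g j w) r ∈ Xs := by
      intro r
      rw [Function.update_apply]
      split
      · exact hwX
      · exact hgX r
    have hwnew : _root_.wronskian (Function.update g j w) = C (aco * c) * _root_.wronskian f := by
      rw [hdetnew, hceq, map_mul, mul_assoc]
    have hwnew0 : _root_.wronskian (Function.update g j w) ≠ 0 := by
      rw [hwnew]
      exact mul_ne_zero (fun hcon => (mul_ne_zero ha0 hc0) (C_eq_zero.1 hcon)) hwf
    have hw0 : w ≠ 0 := by
      have := wr_row_ne _ hwnew0 j
      rwa [Function.update_self] at this
    have hordw : mm + 1 ≤ rootMultiplicity z w := by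
      refine lt_rootMultiplicity_of_isRoot_iterate_derivative hw0 fun k hk => ?_
      have hdk : derivative^[k] w = aco • derivative^[k] (g j) - bco • derivative^[k] (g i) := by
        rw [hwdef, iter_deriv_sub, iter_deriv_smul, iter_deriv_smul]
      rw [IsRoot, hdk, eval_sub, smul_eq_C_mul, smul_eq_C_mul, eval_mul, eval_mul,
        eval_C, eval_C]
      rcases lt_or_eq_of_le hk with hlt | rfl
      · rw [E1 (by omega : k < rootMultiplicity z (g j)),
          E1 (by rw [hmi]; omega : k < rootMultiplicity z (g i))]
        ring
      · rw [← haco, ← hbco]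
        ring
    have hordw_le : rootMultiplicity z w ≤ B := hB w hwX hw0
    have hmmB : mm ≤ B := hB (g j) (hgX j) (hgnz j)
    have hsum_new : (∑ r, (B + 1 - rootMultiplicity z ((Function.update g j w) r))) + 1 ≤
        ∑ r, (B + 1 - rootMultiplicity z (g r)) := by
      have h1 : (B + 1 - rootMultiplicity z (g j)) +
          ∑ r ∈ Finset.univ.erase j, (B + 1 - rootMultiplicity z (g r)) =
          ∑ r, (B + 1 - rootMultiplicity z (g r)) :=
        Finset.add_sum_erase _ (fun r => B + 1 - rootMultiplicity z (g r)) (Finset.mem_univ j)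
      have h2 : (B + 1 - rootMultiplicity z (Function.update g j w j)) +
          ∑ r ∈ Finset.univ.erase j, (B + 1 - rootMultiplicity z (Function.update g j w r)) =
          ∑ r, (B + 1 - rootMultiplicity z (Function.update g j w r)) :=
        Finset.add_sum_erase _
          (fun r => B + 1 - rootMultiplicity z (Function.update g j w r)) (Finset.mem_univ j)
      have h3 : ∑ r ∈ Finset.univ.erase j, (B + 1 - rootMultiplicity z (Function.update g j w r))
          = ∑ r ∈ Finset.univ.erase j, (B + 1 - rootMultiplicity z (g r)) :=
        Finset.sum_congr rfl fun r hr => by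
          rw [Function.update_of_ne (Finset.mem_erase.1 hr).1]
      rw [h3, Function.update_self] at h2
      omega
    have hM1 : M - 1 < M := by omega
    exact IH (M - 1) hM1 (Function.update g j w) hnewmem
      ⟨aco * c, mul_ne_zero ha0 hc0, hwnew⟩ (by omega)

end St13

/-- let `X ∈ Ω_λ` be generic (each `y_a`, the monic polynomial
proportional to the tail Wronskian of the flag basis, is squarefree, and consecutive
`y`'s are coprime) and let `z` be a root of `y_0`. Then the orders of vanishing at `z`
of nonzero elements of `X` are exactly `{0, 1, …, N−2, N}` — i.e. the exponents of
`D_X` at `z` are `0, 1, …, N−2, N`. -/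
theorem statement13 (N : ℕ) (hN : 1 ≤ N) (lam : Fin N → ℕ) (hlam : Antitone lam)
    (X : Submodule ℂ (Polynomial ℂ)) (hX : X ∈ Omega N lam)
    (f : Fin N → Polynomial ℂ) (hf : IsFlagBasis N lam X f)
    (y : ℕ → Polynomial ℂ)
    (hy : ∀ a < N, (y a).Monic ∧ ∃ c : ℂ, c ≠ 0 ∧ wrTail f a = Polynomial.C c * y a)
    (hsq : ∀ a < N, Squarefree (y a))
    (hcop : ∀ a : ℕ, 1 ≤ a → a < N → IsCoprime (y (a - 1)) (y a))
    (z : ℂ) (hz : (y 0).IsRoot z) :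
    ∀ m : ℕ, (∃ g ∈ X, g ≠ 0 ∧ Polynomial.rootMultiplicity z g = m) ↔
      (m + 2 ≤ N ∨ m = N) := by
  classical
  obtain ⟨hrank, -⟩ := hX
  obtain ⟨hli, hspan, -⟩ := hf
  have hfX : ∀ i, f i ∈ X := fun i => by
    rw [← hspan]
    exact Submodule.subset_span (Set.mem_range_self i)
  -- degree bound
  set B : ℕ := ∑ i, (f i).natDegree with hB
  have hXdeg : ∀ p ∈ X, p.natDegree ≤ B := by
    intro p hp
    have hle : X ≤ Polynomial.degreeLE ℂ (B : ℕ) := by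
      rw [← hspan, Submodule.span_le]
      rintro - ⟨i, rfl⟩
      rw [SetLike.mem_coe, Polynomial.mem_degreeLE]
      refine (Polynomial.degree_le_natDegree).trans ?_
      exact_mod_cast Nat.cast_le.2 (Finset.single_le_sum
        (f := fun i => (f i).natDegree) (fun i _ => Nat.zero_le _) (Finset.mem_univ i))
    have := hle hp
    rw [Polynomial.mem_degreeLE] at this
    exact Polynomial.natDegree_le_iff_degree_le.2 this
  have hBord : ∀ p ∈ X, p ≠ 0 → rootMultiplicity z p ≤ B := fun p hp hp0 =>
    (St13.ord_le hp0).trans (hXdeg p hp)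
  -- y 0 and the Wronskian of f
  obtain ⟨hy0monic, c0, hc00, hy0eq⟩ := hy 0 (by omega)
  have hy0ne : y 0 ≠ 0 := hy0monic.ne_zero
  have hwr0 : wrTail f 0 = wronskian f := by
    unfold wrTail
    congr 1
    funext s
    congr 1
    exact Fin.ext (by simp)
  have hordy0 : rootMultiplicity z (y 0) = 1 := by
    have hpos : 0 < rootMultiplicity z (y 0) := (rootMultiplicity_pos hy0ne).2 hz
    by_contra hne1
    have h2 : 2 ≤ rootMultiplicity z (y 0) := by omega
    have hdvd : (Polynomial.X - C z) * (Polynomial.X - C z) ∣ y 0 := by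
      have := (pow_dvd_pow (Polynomial.X - C z) h2).trans (pow_rootMultiplicity_dvd (y 0) z)
      rwa [sq] at this
    exact Polynomial.not_isUnit_X_sub_C z ((hsq 0 (by omega)) _ hdvd)
  have hwfne : wronskian f ≠ 0 := by
    rw [← hwr0, hy0eq]
    exact mul_ne_zero (fun hcon => hc00 (C_eq_zero.1 hcon)) hy0ne
  have hordwf : rootMultiplicity z (wronskian f) = 1 := by
    rw [← hwr0, hy0eq, rootMultiplicity_mul (by rw [← hy0eq, hwr0]; exact hwfne),
      rootMultiplicity_C, hordy0]
  -- get the adapted basis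
  obtain ⟨g', hg'X, ⟨c, hcne, hceq⟩, hg'inj⟩ :=
    St13.lemD z X B hBord f hwfne (∑ i, (B + 1 - rootMultiplicity z (f i))) f hfX
      ⟨1, one_ne_zero, by rw [map_one, one_mul]⟩ le_rfl
  have hwg'ne : wronskian g' ≠ 0 := by
    rw [hceq]
    exact mul_ne_zero (fun hcon => hcne (C_eq_zero.1 hcon)) hwfne
  have hg'nz : ∀ i, g' i ≠ 0 := St13.wr_row_ne g' hwg'ne
  obtain ⟨-, hordwg'⟩ := St13.lemC z g' hg'nz hg'inj
  have hordwg1 : rootMultiplicity z (wronskian g') = 1 := by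
    rw [hceq, rootMultiplicity_mul (by rw [← hceq]; exact hwg'ne), rootMultiplicity_C,
      hordwf]
  have hchoose : N.choose 2 ≤ ∑ i, rootMultiplicity z (g' i) :=
    St13.sum_ord_ge _ hg'inj
  have hsumc : ∑ i, rootMultiplicity z (g' i) = N.choose 2 + 1 := by
    rw [hordwg1] at hordwg'
    omega
  -- the set of orders
  set T : Finset ℕ := Finset.image (fun i => rootMultiplicity z (g' i)) Finset.univ with hT
  have hTcard : T.card = N := by
    rw [hT, Finset.card_image_of_injective _ hg'inj, Finset.card_univ, Fintype.card_fin]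
  have hTsum : ∑ x ∈ T, x = N.choose 2 + 1 := by
    rw [hT, Finset.sum_image (fun a _ b _ h => hg'inj h), hsumc]
  have hTchar := St13.card_sum_eq N hN T hTcard hTsum
  intro m
  rw [← hTchar m]
  constructor
  · rintro ⟨p, hpX, hpne, rfl⟩
    by_contra hmT
    -- extended family
    set h : Fin (N + 1) → ℂ[X] := Fin.snoc g' p with hh
    have hhnz : ∀ k, h k ≠ 0 := by
      intro k
      refine Fin.lastCases ?_ ?_ k
      · rw [hh, Fin.snoc_last]; exact hpne
      · intro i; rw [hh, Fin.snoc_castSucc]; exact hg'nz i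
    have hmem : ∀ i : Fin N, rootMultiplicity z (g' i) ∈ T := fun i =>
      Finset.mem_image.2 ⟨i, Finset.mem_univ _, rfl⟩
    have hhinj : Function.Injective fun k => rootMultiplicity z (h k) := by
      intro k l
      induction k using Fin.lastCases with
      | last =>
        induction l using Fin.lastCases with
        | last => intro _; rfl
        | cast i =>
          intro hkl
          simp only [hh, Fin.snoc_last, Fin.snoc_castSucc] at hkl
          exact absurd (hkl ▸ hmem i) hmT
      | cast i =>
        induction l using Fin.lastCases with
        | last =>
          intro hkl
          simp only [hh, Fin.snoc_last, Fin.snoc_castSucc] at hkl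
          exact absurd (hkl ▸ hmem i) hmT
        | cast i' =>
          intro hkl
          simp only [hh, Fin.snoc_castSucc] at hkl
          exact congrArg Fin.castSucc (hg'inj hkl)
    have hLI : LinearIndependent ℂ h := St13.lemF z h hhnz hhinj
    have hhX : ∀ k, h k ∈ X := by
      intro k
      refine Fin.lastCases ?_ ?_ k
      · rw [hh, Fin.snoc_last]; exact hpX
      · intro i; rw [hh, Fin.snoc_castSucc]; exact hg'X i
    set hco : Fin (N + 1) → X := fun k => ⟨h k, hhX k⟩ with hhco
    have hcomp : h = X.subtype ∘ hco := rfl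
    rw [hcomp] at hLI
    have hLIco : LinearIndependent ℂ hco := LinearIndependent.of_comp X.subtype hLI
    have hfin : Module.Finite ℂ X := Module.finite_of_finrank_pos (by omega)
    have hcard := hLIco.fintype_card_le_finrank
    rw [Fintype.card_fin, hrank] at hcard
    omega
  · intro hmT
    rw [hT, Finset.mem_image] at hmT
    obtain ⟨i, -, hi⟩ := hmT
    exact ⟨g' i, hg'X i, hg'nz i, hi⟩
end
end
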